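/- arXiv:math/0209041 — 2 statements merged into one kernel-verified Lean document; each statement's English description precedes it below -/
import Mathlib

section
/- Let A be a unital C*-algebra generated by self-adjoint elements a₁,…,aₙ,b₁,…,bₘ. Then χ_top(a₁,…,aₙ : b₁,…,bₘ) ≤ κ(a₁,…,aₙ : b₁,…,bₘ), i.e. the topological free entropy of a₁,…,aₙ in the presence of b₁,…,bₘ is at most the free capacity of a₁,…,aₙ in the presence of b₁,…,bₘ. -/
open scoped ComplexOrder
open Matrix MeasureTheory Filter
open scoped ENNReal NNReal
noncomputable section

/-! ### Self-adjoint matrices as a real Hilbert space with ⟪A,B⟫ = Re Tr(AB) -/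

/-- The space of `k × k` complex matrices. -/
abbrev Mat (k : ℕ) : Type := Matrix (Fin k) (Fin k) ℂ

/-- The operator norm of a `k × k` complex matrix (the norm of the induced operator on `ℓ²`). -/
def opNorm {k : ℕ} (M : Mat k) : ℝ := ‖Matrix.toEuclideanCLM (𝕜 := ℂ) M‖

/-- Self-adjoint `k × k` complex matrices, as a standalone type. -/
@[ext] structure SA (k : ℕ) : Type where
  val : Mat k
  isSA : star val = val

namespace SA
variable {k : ℕ}

lemma val_injective : Function.Injective (SA.val (k := k)) := by
  rintro ⟨a, _⟩ ⟨b, _⟩ h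
  cases h; rfl

instance : Zero (SA k) := ⟨⟨0, star_zero _⟩⟩
instance : Add (SA k) := ⟨fun A B => ⟨A.val + B.val, by rw [star_add, A.isSA, B.isSA]⟩⟩
instance : Neg (SA k) := ⟨fun A => ⟨-A.val, by rw [star_neg, A.isSA]⟩⟩
instance : Sub (SA k) := ⟨fun A B => ⟨A.val - B.val, by rw [star_sub, A.isSA, B.isSA]⟩⟩
instance : SMul ℕ (SA k) := ⟨fun n A => ⟨n • A.val, by rw [star_nsmul, A.isSA]⟩⟩
instance : SMul ℤ (SA k) := ⟨fun n A => ⟨n • A.val, by rw [star_zsmul, A.isSA]⟩⟩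
instance : SMul ℝ (SA k) :=
  ⟨fun r A => ⟨r • A.val, by rw [star_smul, star_trivial, A.isSA]⟩⟩

instance : AddCommGroup (SA k) :=
  val_injective.addCommGroup SA.val rfl (fun _ _ => rfl) (fun _ => rfl) (fun _ _ => rfl)
    (fun _ _ => rfl) (fun _ _ => rfl)

instance : Module ℝ (SA k) :=
  val_injective.module ℝ
    { toFun := SA.val, map_zero' := rfl, map_add' := fun _ _ => rfl } (fun _ _ => rfl)

lemma trace_sq (A : SA k) :
    Matrix.trace (A.val * A.val) = ((∑ i, ∑ j, Complex.normSq (A.val j i) : ℝ) : ℂ) := by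
  have hA : A.valᴴ = A.val := A.isSA
  rw [show A.val * A.val = A.valᴴ * A.val by rw [hA]]
  push_cast
  simp [Matrix.trace, Matrix.diag, Matrix.mul_apply, Matrix.conjTranspose_apply,
    Complex.star_def, ← Complex.normSq_eq_conj_mul_self]

/-- The real inner product ⟪A,B⟫ = Re Tr(AB) on self-adjoint matrices. -/
def core (k : ℕ) : InnerProductSpace.Core ℝ (SA k) where
  inner A B := (Matrix.trace (A.val * B.val)).re
  conj_inner_symm A B := by simp [Matrix.trace_mul_comm A.val B.val]
  re_inner_nonneg A := by
    show (0:ℝ) ≤ (Matrix.trace (A.val * A.val)).re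
    rw [trace_sq]
    simp only [Complex.ofReal_re]
    exact Finset.sum_nonneg fun i _ => Finset.sum_nonneg fun j _ => Complex.normSq_nonneg _
  definite A := by
    intro h
    have h2 : (Matrix.trace (A.val * A.val)).re = 0 := h
    rw [trace_sq] at h2
    simp only [Complex.ofReal_re] at h2
    have hz := (Finset.sum_eq_zero_iff_of_nonneg (fun i _ => Finset.sum_nonneg
      (fun j _ => Complex.normSq_nonneg (A.val j i)))).mp h2
    have : A.val = 0 := by
      ext i j
      have := (Finset.sum_eq_zero_iff_of_nonneg
        (fun l _ => Complex.normSq_nonneg (A.val l j))).mp (hz j (Finset.mem_univ j)) i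
        (Finset.mem_univ i)
      simpa [Complex.normSq_eq_zero] using this
    exact val_injective this
  add_left A B C := by
    show (Matrix.trace ((A.val + B.val) * C.val)).re = _
    simp [add_mul, Matrix.trace_add]
  smul_left A B r := by
    show (Matrix.trace ((r • A.val) * B.val)).re = _
    simp [smul_mul_assoc, Matrix.trace_smul]

instance : NormedAddCommGroup (SA k) := (core k).toNormedAddCommGroup
instance : InnerProductSpace ℝ (SA k) := InnerProductSpace.ofCore (core k).toCore
instance : MeasurableSpace (SA k) := borel _
instance : BorelSpace (SA k) := ⟨rfl⟩
instance : FiniteDimensional ℝ (SA k) :=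
  FiniteDimensional.of_injective
    ({ toFun := SA.val, map_add' := fun _ _ => rfl,
       map_smul' := fun _ _ => rfl } : SA k →ₗ[ℝ] Mat k)
    val_injective





end SA
/-! ### Noncommutative polynomials -/

/-- Noncommutative polynomials with complex coefficients in `N` indeterminates. -/
abbrev NCPoly (N : ℕ) : Type := FreeAlgebra ℂ (Fin N)

/-- Evaluation of a noncommutative polynomial at an `N`-tuple of elements of a
unital complex algebra. -/
def NCPoly.eval {N : ℕ} {B : Type*} [Ring B] [Algebra ℂ B] (P : NCPoly N) (x : Fin N → B) : B :=
  FreeAlgebra.lift ℂ x P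

/-- The ordered product `x (w 0) * x (w 1) * ⋯ * x (w (p-1))` of the word `w`. -/
def wordProd {B : Type*} [Monoid B] {N : ℕ} (x : Fin N → B) {p : ℕ} (w : Fin p → Fin N) : B :=
  (List.ofFn fun i => x (w i)).prod

/-! ### Tracial states -/

section TracialState
variable {A : Type*} [Ring A] [Module ℂ A] [StarRing A]

/-- A tracial state on a unital complex ⋆-algebra: a linear functional `τ` with `τ 1 = 1`,
`τ (x⋆ x) ≥ 0` and `τ (x y) = τ (y x)`. -/
structure IsTracialState (τ : A →ₗ[ℂ] ℂ) : Prop where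
  map_one : τ 1 = 1
  nonneg : ∀ x : A, 0 ≤ τ (star x * x)
  mul_comm : ∀ x y : A, τ (x * y) = τ (y * x)

end TracialState

/-! ### Voiculescu's microstates free entropy and free capacity -/

section FreeEntropy
variable {A : Type*} [Ring A] [Module ℂ A] [StarRing A] {n m : ℕ}

/-- The matricial microstates `Γ_R(a₁,…,aₙ,b₁,…,bₘ; k, l, ε; τ)`: tuples of self-adjoint
`k × k` matrices of operator norm at most `R` such that the normalized trace of every word of
length between `1` and `l` differs by at most `ε` from the corresponding `τ`-moment. -/
def GammaR (R : ℝ) (a : Fin n → A) (b : Fin m → A) (τ : A →ₗ[ℂ] ℂ) (k l : ℕ) (ε : ℝ) :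
    Set ((Fin n → SA k) × (Fin m → SA k)) :=
  {CD | (∀ i, opNorm (CD.1 i).val ≤ R) ∧ (∀ j, opNorm (CD.2 j).val ≤ R) ∧
    ∀ (p : ℕ), 1 ≤ p → p ≤ l → ∀ w : Fin p → Fin (n + m),
      ‖(k : ℂ)⁻¹ *
          Matrix.trace (wordProd (Fin.append (fun i => (CD.1 i).val) fun j => (CD.2 j).val) w)
        - τ (wordProd (Fin.append a b) w)‖ ≤ ε}

/-- The microstates for `a₁,…,aₙ` in the presence of `b₁,…,bₘ`: the projection of
`Γ_R(a₁,…,aₙ,b₁,…,bₘ; k, l, ε; τ)` on the first `n` coordinates. -/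
def GammaRPres (R : ℝ) (a : Fin n → A) (b : Fin m → A) (τ : A →ₗ[ℂ] ℂ) (k l : ℕ) (ε : ℝ) :
    Set (Fin n → SA k) :=
  Prod.fst '' GammaR R a b τ k l ε

/-- Voiculescu's microstates free entropy `χ(a₁,…,aₙ : b₁,…,bₘ; τ)` of `a₁,…,aₙ` in the
presence of `b₁,…,bₘ`, with respect to the tracial state `τ`. -/
def chiPres (a : Fin n → A) (b : Fin m → A) (τ : A →ₗ[ℂ] ℂ) : EReal :=
  ⨆ (R : ℝ) (_ : 0 < R), ⨅ (l : ℕ) (ε : ℝ) (_ : 0 < ε),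
    Filter.atTop.limsup fun k : ℕ =>
      (↑(((k : ℝ) ^ 2)⁻¹) : EReal) * ENNReal.log (volume (GammaRPres R a b τ k l ε))
        + (↑((n : ℝ) / 2 * Real.log k) : EReal)

/-- Voiculescu's microstates free entropy `χ(a₁,…,aₙ; τ)`. -/
def chi (a : Fin n → A) (τ : A →ₗ[ℂ] ℂ) : EReal :=
  chiPres a (fun i : Fin 0 => i.elim0) τ

/-- The free capacity `κ(a₁,…,aₙ : b₁,…,bₘ)` of `a₁,…,aₙ` in the presence of `b₁,…,bₘ`:
the supremum of `χ(a₁,…,aₙ : b₁,…,bₘ; τ)` over all tracial states `τ` of the ambient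
algebra. -/
def kappaPres (a : Fin n → A) (b : Fin m → A) : EReal :=
  ⨆ (τ : A →ₗ[ℂ] ℂ) (_ : IsTracialState τ), chiPres a b τ

/-- The free capacity `κ(a₁,…,aₙ)`. -/
def kappa (a : Fin n → A) : EReal :=
  ⨆ (τ : A →ₗ[ℂ] ℂ) (_ : IsTracialState τ), chi a τ

end FreeEntropy

/-! ### Topological free entropy -/

section TopEntropy
variable {A : Type*} [NormedRing A] [NormedAlgebra ℂ A] [StarRing A] {n m : ℕ}

/-- The norm-microstates `Γ_top(a₁,…,aₙ,b₁,…,bₘ; k, ε, P₁,…,P_r)`: tuples of self-adjoint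
`k × k` matrices on which each of the noncommutative polynomials `P j` has operator norm
`ε`-close to its norm at `(a, b)`. -/
def GammaTop (a : Fin n → A) (b : Fin m → A) (k : ℕ) (ε : ℝ) {r : ℕ}
    (P : Fin r → NCPoly (n + m)) : Set ((Fin n → SA k) × (Fin m → SA k)) :=
  {CD | ∀ j : Fin r,
    |opNorm ((P j).eval (Fin.append (fun i => (CD.1 i).val) fun i => (CD.2 i).val))
      - ‖(P j).eval (Fin.append a b)‖| ≤ ε}

/-- Norm-microstates of `a₁,…,aₙ` in the presence of `b₁,…,bₘ`: the projection of
`Γ_top(a₁,…,aₙ,b₁,…,bₘ; k, ε, P₁,…,P_r)` on the first `n` coordinates. -/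
def GammaTopPres (a : Fin n → A) (b : Fin m → A) (k : ℕ) (ε : ℝ) {r : ℕ}
    (P : Fin r → NCPoly (n + m)) : Set (Fin n → SA k) :=
  Prod.fst '' GammaTop a b k ε P

/-- The topological free entropy `χ_top(a₁,…,aₙ : b₁,…,bₘ)` of `a₁,…,aₙ` in the presence
of `b₁,…,bₘ`. -/
def chiTopPres (a : Fin n → A) (b : Fin m → A) : EReal :=
  ⨅ (ε : ℝ) (_ : 0 < ε) (r : ℕ) (P : Fin r → NCPoly (n + m)),
    Filter.atTop.limsup fun k : ℕ =>
      (↑(((k : ℝ) ^ 2)⁻¹) : EReal) * ENNReal.log (volume (GammaTopPres a b k ε P))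
        + (↑((n : ℝ) / 2 * Real.log k) : EReal)

/-- The topological free entropy `χ_top(a₁,…,aₙ)`. -/
def chiTop (a : Fin n → A) : EReal :=
  chiTopPres a (fun i : Fin 0 => i.elim0)

end TopEntropy
/-! ### Topological free entropy dimension -/

/-- The minimal number of elements of an `ε`-net of `X` for the distance function `d`
(`⊤` if there is no finite `ε`-net). -/
def coveringNumber {α : Type*} (d : α → α → ℝ) (ε : ℝ) (X : Set α) : ℕ∞ :=
  ⨅ (S : Finset α) (_ : ∀ x ∈ X, ∃ s ∈ S, d x s ≤ ε), (S.card : ℕ∞)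

/-- The metric on `n`-tuples of `k × k` matrices given by the maximum of the operator norms
of the differences of the coordinates. -/
def opDist {n k : ℕ} (x y : Fin n → Mat k) : ℝ := ⨆ i, opNorm (x i - y i)

/-- The normalized Hilbert–Schmidt metric
`|(A₁,…,Aₙ)|₂ = k^{-1/2} (Σ_j Tr(A_j²))^{1/2}` on `n`-tuples of `k × k` matrices,
applied to differences. -/
def hsDist {n k : ℕ} (x y : Fin n → Mat k) : ℝ :=
  Real.sqrt ((k : ℝ)⁻¹ * (∑ j, Matrix.trace ((x j - y j) * (x j - y j))).re)

section TopDim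
variable {A : Type*} [NormedRing A] [NormedAlgebra ℂ A] [StarRing A] {n m : ℕ}

/-- The norm-microstates of `a₁,…,aₙ` in the presence of `b₁,…,bₘ`, viewed as a subset of
`(M_k)ⁿ`. -/
def GammaTopPresMat (a : Fin n → A) (b : Fin m → A) (k : ℕ) (ε : ℝ) {r : ℕ}
    (P : Fin r → NCPoly (n + m)) : Set (Fin n → Mat k) :=
  (fun C : Fin n → SA k => fun i => (C i).val) '' GammaTopPres a b k ε P

/-- `D_ε(a₁,…,aₙ : b₁,…,bₘ)`, computed with respect to the family of metrics `d` on tuples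
of matrices. -/
def DepsWith (d : ∀ k : ℕ, (Fin n → Mat k) → (Fin n → Mat k) → ℝ)
    (a : Fin n → A) (b : Fin m → A) (ε : ℝ) : EReal :=
  ⨅ (r : ℕ) (P : Fin r → NCPoly (n + m)),
    Filter.atTop.limsup fun k : ℕ =>
      (↑(((k : ℝ) ^ 2)⁻¹) : EReal) *
        ENNReal.log ((coveringNumber (d k) ε (GammaTopPresMat a b k ε P) : ℕ∞) : ℝ≥0∞)

/-- The topological free entropy dimension computed with respect to the family of metrics
`d` on tuples of matrices: `limsup_{ε→0⁺} D_ε / |log ε|`. -/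
def deltaTopWith (d : ∀ k : ℕ, (Fin n → Mat k) → (Fin n → Mat k) → ℝ)
    (a : Fin n → A) (b : Fin m → A) : EReal :=
  Filter.limsup (fun ε : ℝ => (↑|Real.log ε|⁻¹ : EReal) * DepsWith d a b ε)
    (nhdsWithin 0 (Set.Ioi 0))

/-- The topological free entropy dimension `δ_top(a₁,…,aₙ : b₁,…,bₘ)` (for the operator-norm
metric on tuples of matrices). -/
def deltaTopPres (a : Fin n → A) (b : Fin m → A) : EReal :=
  deltaTopWith (fun _ => opDist) a b

/-- The topological free entropy dimension `δ_top(a₁,…,aₙ)`. -/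
def deltaTop (a : Fin n → A) : EReal :=
  deltaTopPres a (fun i : Fin 0 => i.elim0)

/-! ### Semi-microstates -/

/-- The norm-semi-microstates `Γ_top½(a₁,…,aₙ,b₁,…,bₘ; k, ε, P₁,…,P_r)`: only the one-sided
inequalities `‖P_j(C,D)‖ ≤ ‖P_j(a,b)‖ + ε` are required. -/
def GammaTopHalf (a : Fin n → A) (b : Fin m → A) (k : ℕ) (ε : ℝ) {r : ℕ}
    (P : Fin r → NCPoly (n + m)) : Set ((Fin n → SA k) × (Fin m → SA k)) :=
  {CD | ∀ j : Fin r,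
    opNorm ((P j).eval (Fin.append (fun i => (CD.1 i).val) fun i => (CD.2 i).val))
      ≤ ‖(P j).eval (Fin.append a b)‖ + ε}

/-- Norm-semi-microstates of `a₁,…,aₙ` in the presence of `b₁,…,bₘ`. -/
def GammaTopHalfPres (a : Fin n → A) (b : Fin m → A) (k : ℕ) (ε : ℝ) {r : ℕ}
    (P : Fin r → NCPoly (n + m)) : Set (Fin n → SA k) :=
  Prod.fst '' GammaTopHalf a b k ε P

/-- The topological free entropy `χ_top½(a₁,…,aₙ : b₁,…,bₘ)` defined via
norm-semi-microstates. -/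
def chiTopHalfPres (a : Fin n → A) (b : Fin m → A) : EReal :=
  ⨅ (ε : ℝ) (_ : 0 < ε) (r : ℕ) (P : Fin r → NCPoly (n + m)),
    Filter.atTop.limsup fun k : ℕ =>
      (↑(((k : ℝ) ^ 2)⁻¹) : EReal) * ENNReal.log (volume (GammaTopHalfPres a b k ε P))
        + (↑((n : ℝ) / 2 * Real.log k) : EReal)

end TopDim
namespace Entropy0

variable {N : ℕ}

/-- The word `w` as an element of the free algebra. -/
def wordElem (l : List (Fin N)) : NCPoly N := (l.map (FreeAlgebra.ι ℂ)).prod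

abbrev LM : NCPoly N ≃ₐ[ℂ] MonoidAlgebra ℂ (FreeMonoid (Fin N)) :=
  FreeAlgebra.equivMonoidAlgebraFreeMonoid

@[simp] lemma wordElem_nil : wordElem ([] : List (Fin N)) = 1 := rfl

lemma wordElem_cons (a : Fin N) (l : List (Fin N)) :
    wordElem (a :: l) = FreeAlgebra.ι ℂ a * wordElem l := by
  simp [wordElem]

lemma LM_wordElem (l : List (Fin N)) :
    LM (wordElem l) = MonoidAlgebra.single (FreeMonoid.ofList l) 1 := by
  induction l with
  | nil => simp [MonoidAlgebra.one_def]
  | cons a l ih =>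
      rw [wordElem_cons, _root_.map_mul, ih]
      have ha : LM (FreeAlgebra.ι ℂ a) = MonoidAlgebra.single (FreeMonoid.of a) 1 := by
        simp [FreeAlgebra.equivMonoidAlgebraFreeMonoid]
      rw [ha, MonoidAlgebra.single_mul_single, one_mul]
      rfl

lemma decomp (Q : NCPoly N) :
    Q = (LM Q).coeff.sum fun w c => c • wordElem (FreeMonoid.toList w) := by
  apply (LM (N := N)).injective
  rw [map_finsuppSum (LM (N := N)) (LM Q).coeff]
  have h : ((LM Q).coeff.sum fun w c => LM (c • wordElem (FreeMonoid.toList w)))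
      = (LM Q).coeff.sum fun w c => MonoidAlgebra.single w c := by
    refine Finsupp.sum_congr fun w _ => ?_
    rw [_root_.map_smul, LM_wordElem, FreeMonoid.ofList_toList, MonoidAlgebra.smul_single',
      mul_one]
  rw [h, MonoidAlgebra.sum_coeff_single]

/-- Formal evaluation of a polynomial against a "moment function" on words. -/
def ev (φ : List (Fin N) → ℂ) (Q : NCPoly N) : ℂ :=
  (LM Q).coeff.sum fun w c => c * φ (FreeMonoid.toList w)

lemma ev_linear (T : NCPoly N →ₗ[ℂ] ℂ) (Q : NCPoly N) :
    ev (fun l => T (wordElem l)) Q = T Q := by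
  conv_rhs => rw [decomp Q]
  rw [map_finsuppSum T (LM Q).coeff]
  refine Finsupp.sum_congr fun w _ => ?_
  rw [_root_.map_smul, smul_eq_mul]

lemma ev_wordElem (φ : List (Fin N) → ℂ) (l : List (Fin N)) :
    ev φ (wordElem l) = φ l := by
  rw [ev, LM_wordElem, MonoidAlgebra.coeff_single, Finsupp.sum_single_index (by simp), one_mul, FreeMonoid.toList_ofList]

lemma ev_one (φ : List (Fin N) → ℂ) : ev φ 1 = φ [] := by
  rw [← wordElem_nil, ev_wordElem]

lemma continuous_ev (Q : NCPoly N) :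
    Continuous fun φ : List (Fin N) → ℂ => ev φ Q := by
  unfold ev Finsupp.sum
  exact continuous_finset_sum _ fun w _ => continuous_const.mul (continuous_apply _)

lemma lift_wordElem {B : Type*} [Ring B] [Algebra ℂ B] (x : Fin N → B) (l : List (Fin N)) :
    FreeAlgebra.lift ℂ x (wordElem l) = (l.map x).prod := by
  rw [wordElem, map_list_prod, List.map_map]
  congr 1
  simp [Function.comp_def]

lemma listProd_ofFn {B : Type*} [Ring B] [Algebra ℂ B] (x : Fin N → B) {p : ℕ}
    (w : Fin p → Fin N) : ((List.ofFn w).map x).prod = wordProd x w := by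
  rw [List.map_ofFn]; rfl

/-- The formal adjoint of a noncommutative polynomial (with respect to self-adjoint
generators): reverse each word and conjugate each coefficient. -/
def starP (Q : NCPoly N) : NCPoly N :=
  (LM Q).coeff.sum fun w c => (starRingEnd ℂ) c • wordElem (FreeMonoid.toList w).reverse

lemma star_listProd {B : Type*} [Monoid B] [StarMul B] (l : List B) :
    star l.prod = (l.map star).reverse.prod := by
  induction l with
  | nil => simp
  | cons a l ih => simp [StarMul.star_mul, ih]

lemma lift_starP {B : Type*} [Ring B] [Algebra ℂ B] [StarRing B] [StarModule ℂ B]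
    (x : Fin N → B) (hx : ∀ i, IsSelfAdjoint (x i)) (Q : NCPoly N) :
    FreeAlgebra.lift ℂ x (starP Q) = star (FreeAlgebra.lift ℂ x Q) := by
  conv_rhs => rw [decomp Q]
  rw [starP, map_finsuppSum (FreeAlgebra.lift ℂ x) _, map_finsuppSum (FreeAlgebra.lift ℂ x) _]
  rw [Finsupp.sum, Finsupp.sum, star_sum]
  refine Finset.sum_congr rfl fun w _ => ?_
  rw [_root_.map_smul, _root_.map_smul, lift_wordElem, lift_wordElem, star_smul,
    star_listProd, List.map_map, ← List.map_reverse]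
  congr 1
  exact congrArg List.prod (List.map_congr_left fun i _ => (hx i).symm)


variable {k : ℕ}

lemma opNorm_nonneg (M : Mat k) : 0 ≤ opNorm M := norm_nonneg _

lemma opNorm_one_le : opNorm (1 : Mat k) ≤ 1 := by
  rw [opNorm, _root_.map_one]
  exact ContinuousLinearMap.norm_id_le

lemma opNorm_mul_le (M M' : Mat k) : opNorm (M * M') ≤ opNorm M * opNorm M' := by
  rw [opNorm, _root_.map_mul]
  exact norm_mul_le _ _

lemma coord_le_norm (y : EuclideanSpace ℂ (Fin k)) (i : Fin k) : ‖y i‖ ≤ ‖y‖ := by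
  rw [EuclideanSpace.norm_eq]
  calc ‖y i‖ = Real.sqrt (‖y i‖ ^ 2) := (Real.sqrt_sq (norm_nonneg _)).symm
  _ ≤ _ := Real.sqrt_le_sqrt (Finset.single_le_sum (f := fun j => ‖y j‖ ^ 2)
      (fun j _ => sq_nonneg _) (Finset.mem_univ i))

lemma abs_entry_le_opNorm (M : Mat k) (i j : Fin k) : ‖M i j‖ ≤ opNorm M := by
  set f := Matrix.toEuclideanCLM (𝕜 := ℂ) M
  set x : EuclideanSpace ℂ (Fin k) := (WithLp.equiv 2 _).symm (Pi.single j 1)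
  have hx : ‖x‖ = 1 := by
    have : x = EuclideanSpace.single j (1 : ℂ) := rfl
    rw [this, EuclideanSpace.norm_single, norm_one]
  have hfx : f x i = M i j := by
    show (Matrix.toEuclideanCLM (𝕜 := ℂ) M) ((WithLp.equiv 2 _).symm (Pi.single j 1)) i = M i j
    show (M *ᵥ Pi.single j (1:ℂ)) i = M i j
    simp [Matrix.mulVec_single]
  calc ‖M i j‖ = ‖f x i‖ := by rw [hfx]
  _ ≤ ‖f x‖ := coord_le_norm _ _
  _ ≤ ‖f‖ * ‖x‖ := f.le_opNorm x
  _ = opNorm M := by rw [hx, mul_one]; rfl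

lemma abs_trace_le (M : Mat k) : ‖Matrix.trace M‖ ≤ k * opNorm M := by
  calc ‖Matrix.trace M‖ ≤ ∑ i, ‖M i i‖ := by
        simpa [Matrix.trace, Matrix.diag] using
          (norm_sum_le Finset.univ (fun i => M i i))
  _ ≤ ∑ _i : Fin k, opNorm M := Finset.sum_le_sum fun i _ => abs_entry_le_opNorm M i i
  _ = k * opNorm M := by simp [Finset.sum_const, mul_comm]

lemma opNorm_listProd_le {ρ : ℝ} (hρ : 1 ≤ ρ) (ms : List (Mat k))
    (h : ∀ M ∈ ms, opNorm M ≤ ρ) : opNorm ms.prod ≤ ρ ^ ms.length := by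
  induction ms with
  | nil => simpa using opNorm_one_le
  | cons M l ih =>
      rw [List.prod_cons, List.length_cons, pow_succ, mul_comm (ρ ^ l.length) ρ]
      refine (opNorm_mul_le _ _).trans (mul_le_mul (h M (by simp)) (ih ?_) (opNorm_nonneg _)
        (le_trans zero_le_one hρ))
      exact fun M' hM' => h M' (List.mem_cons_of_mem _ hM')

lemma trace_star_mul_self (M : Mat k) :
    Matrix.trace (star M * M) = ((∑ i, ∑ j, Complex.normSq (M j i) : ℝ) : ℂ) := by
  rw [Matrix.star_eq_conjTranspose]
  push_cast
  simp [Matrix.trace, Matrix.diag, Matrix.mul_apply, Matrix.conjTranspose_apply,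
    Complex.star_def, ← Complex.normSq_eq_conj_mul_self]


section Mom
variable {N : ℕ}

/-- The trace-moment functional of a tuple of matrices. -/
def momFun (k : ℕ) (x : Fin N → Mat k) : List (Fin N) → ℂ :=
  fun w => (k : ℂ)⁻¹ * Matrix.trace ((w.map x).prod)

/-- Normalized trace of the evaluation, as a linear functional on polynomials. -/
def trEval (k : ℕ) (x : Fin N → Mat k) : NCPoly N →ₗ[ℂ] ℂ :=
  (k : ℂ)⁻¹ • ((Matrix.traceLinearMap (Fin k) ℂ ℂ).comp (FreeAlgebra.lift ℂ x).toLinearMap)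

lemma trEval_apply (k : ℕ) (x : Fin N → Mat k) (Q : NCPoly N) :
    trEval k x Q = (k : ℂ)⁻¹ * Matrix.trace (FreeAlgebra.lift ℂ x Q) := rfl

lemma momFun_eq (k : ℕ) (x : Fin N → Mat k) (w : List (Fin N)) :
    momFun k x w = trEval k x (wordElem w) := by
  rw [trEval_apply, lift_wordElem, momFun]

lemma ev_momFun (k : ℕ) (x : Fin N → Mat k) (Q : NCPoly N) :
    ev (momFun k x) Q = (k : ℂ)⁻¹ * Matrix.trace (FreeAlgebra.lift ℂ x Q) := by
  rw [← trEval_apply]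
  have h : momFun k x = fun l => trEval k x (wordElem l) := funext fun l => momFun_eq k x l
  rw [h, ev_linear]

lemma abs_ev_momFun_le {k : ℕ} (hk : 1 ≤ k) (x : Fin N → Mat k) (Q : NCPoly N) :
    ‖ev (momFun k x) Q‖ ≤ opNorm (FreeAlgebra.lift ℂ x Q) := by
  have hk0 : ((k : ℝ)) ≠ 0 := by positivity
  rw [ev_momFun, norm_mul]
  have h1 : ‖((k : ℂ))⁻¹‖ = (k : ℝ)⁻¹ := by
    rw [norm_inv]; simp
  rw [h1]
  calc (k:ℝ)⁻¹ * ‖Matrix.trace (FreeAlgebra.lift ℂ x Q)‖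
      ≤ (k:ℝ)⁻¹ * (k * opNorm (FreeAlgebra.lift ℂ x Q)) := by
        refine mul_le_mul_of_nonneg_left ?_ (by positivity)
        exact abs_trace_le _
  _ = opNorm (FreeAlgebra.lift ℂ x Q) := by field_simp

lemma ev_momFun_comm (k : ℕ) (x : Fin N → Mat k) (Q Q' : NCPoly N) :
    ev (momFun k x) (Q * Q') = ev (momFun k x) (Q' * Q) := by
  rw [ev_momFun, ev_momFun, _root_.map_mul, _root_.map_mul, Matrix.trace_mul_comm]

lemma ev_momFun_nonneg (k : ℕ) (x : Fin N → Mat k) (hx : ∀ i, IsSelfAdjoint (x i))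
    (Q : NCPoly N) : 0 ≤ ev (momFun k x) (starP Q * Q) := by
  rw [ev_momFun, _root_.map_mul, lift_starP x hx, trace_star_mul_self]
  have h2 : ((k : ℂ))⁻¹ = Complex.ofReal ((k : ℝ)⁻¹) := by push_cast; ring
  rw [h2, ← Complex.ofReal_mul]
  rw [Complex.zero_le_real]
  have : (0:ℝ) ≤ ∑ i, ∑ j, Complex.normSq ((FreeAlgebra.lift ℂ x) Q j i) :=
    Finset.sum_nonneg fun i _ => Finset.sum_nonneg fun j _ => Complex.normSq_nonneg _
  positivity

lemma momFun_nil {k : ℕ} (hk : 1 ≤ k) (x : Fin N → Mat k) : momFun k x [] = 1 := by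
  have hk0 : ((k : ℂ)) ≠ 0 := by
    simp only [ne_eq, Nat.cast_eq_zero]; omega
  simp [momFun, Matrix.trace_one, inv_mul_cancel₀ hk0]

lemma momFun_bound {k : ℕ} (hk : 1 ≤ k) {ρ : ℝ} (hρ : 1 ≤ ρ) (x : Fin N → Mat k)
    (hx : ∀ i, opNorm (x i) ≤ ρ) (w : List (Fin N)) :
    ‖momFun k x w‖ ≤ ρ ^ w.length := by
  have hk0 : ((k : ℝ)) ≠ 0 := by positivity
  rw [momFun, norm_mul]
  have h1 : ‖((k : ℂ))⁻¹‖ = (k : ℝ)⁻¹ := by rw [norm_inv]; simp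
  rw [h1]
  have h2 : ‖Matrix.trace ((w.map x).prod)‖ ≤ k * (ρ ^ w.length) := by
    refine (abs_trace_le _).trans ?_
    refine mul_le_mul_of_nonneg_left ?_ (by positivity)
    have := opNorm_listProd_le hρ (w.map x) ?_
    · simpa using this
    · intro M hM
      obtain ⟨i, _, rfl⟩ := List.mem_map.mp hM
      exact hx i
  calc (k:ℝ)⁻¹ * ‖Matrix.trace ((w.map x).prod)‖ ≤ (k:ℝ)⁻¹ * (k * ρ ^ w.length) := by
        refine mul_le_mul_of_nonneg_left h2 (by positivity)
  _ = ρ ^ w.length := by field_simp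

end Mom

section Tracial
variable {A : Type*} [NormedRing A] [NormedAlgebra ℂ A] [StarRing A]
    [CStarRing A] [CompleteSpace A] [StarModule ℂ A] {N : ℕ}

/-- `ev` as a linear functional on polynomials. -/
def evL (φ : List (Fin N) → ℂ) : NCPoly N →ₗ[ℂ] ℂ :=
  (Finsupp.linearCombination ℂ (fun w : FreeMonoid (Fin N) => φ (FreeMonoid.toList w))).comp
    ((MonoidAlgebra.coeffLinearEquiv ℂ).toLinearMap.comp (LM (N := N)).toLinearMap)

lemma evL_apply (φ : List (Fin N) → ℂ) (Q : NCPoly N) : evL φ Q = ev φ Q := by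
  rw [evL, LinearMap.comp_apply, LinearMap.comp_apply, Finsupp.linearCombination_apply]
  rfl

lemma isClosed_nonneg : IsClosed {w : ℂ | 0 ≤ w} := by
  have h : {w : ℂ | 0 ≤ w} = Complex.re ⁻¹' Set.Ici 0 ∩ Complex.im ⁻¹' {0} := by
    ext w
    simp only [Set.mem_setOf_eq, Set.mem_inter_iff, Set.mem_preimage, Set.mem_Ici,
      Set.mem_singleton_iff, Complex.le_def, Complex.zero_re, Complex.zero_im]
    exact ⟨fun ⟨h1, h2⟩ => ⟨h1, h2.symm⟩, fun ⟨h1, h2⟩ => ⟨h1, h2.symm⟩⟩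
  rw [h]
  exact (isClosed_Ici.preimage Complex.continuous_re).inter
    (isClosed_singleton.preimage Complex.continuous_im)

lemma exists_tracial (x : Fin N → A) (hx : ∀ i, IsSelfAdjoint (x i))
    (hdense : Dense ((LinearMap.range (FreeAlgebra.lift ℂ x).toLinearMap : Submodule ℂ A) : Set A))
    (φ : List (Fin N) → ℂ)
    (hone : φ [] = 1)
    (hbd : ∀ Q : NCPoly N, ‖ev φ Q‖ ≤ ‖FreeAlgebra.lift ℂ x Q‖)
    (hcomm : ∀ Q Q' : NCPoly N, ev φ (Q * Q') = ev φ (Q' * Q))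
    (hpos : ∀ Q : NCPoly N, 0 ≤ ev φ (starP Q * Q)) :
    ∃ τ : A →ₗ[ℂ] ℂ, IsTracialState τ ∧
      ∀ Q : NCPoly N, τ (FreeAlgebra.lift ℂ x Q) = ev φ Q := by
  set πL := (FreeAlgebra.lift ℂ x : NCPoly N →ₐ[ℂ] A).toLinearMap with hπL
  set Sm := LinearMap.range πL with hSm
  have hker : LinearMap.ker πL ≤ LinearMap.ker (evL φ) := by
    intro Q hQ
    rw [LinearMap.mem_ker] at hQ ⊢
    rw [evL_apply]
    have hb := hbd Q
    rw [show (FreeAlgebra.lift ℂ x) Q = πL Q from rfl, hQ, norm_zero] at hb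
    exact norm_le_zero_iff.mp hb
  set τ0 : ↥Sm →ₗ[ℂ] ℂ :=
    ((LinearMap.ker πL).liftQ (evL φ) hker).comp
      (πL.quotKerEquivRange.symm : ↥Sm ≃ₗ[ℂ] (NCPoly N ⧸ LinearMap.ker πL)).toLinearMap
    with hτ0def
  have hτ0 : ∀ Q : NCPoly N, τ0 ⟨πL Q, LinearMap.mem_range_self πL Q⟩ = ev φ Q := by
    intro Q
    show ((LinearMap.ker πL).liftQ (evL φ) hker)
      ((πL.quotKerEquivRange.symm) ⟨πL Q, LinearMap.mem_range_self πL Q⟩) = _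
    rw [LinearMap.quotKerEquivRange_symm_apply_image, Submodule.mkQ_apply,
      Submodule.liftQ_apply, evL_apply]
  have hbound : ∀ s : ↥Sm, ‖τ0 s‖ ≤ 1 * ‖(s : A)‖ := by
    rintro ⟨s, hs⟩
    obtain ⟨Q, rfl⟩ := hs
    have h1 : τ0 ⟨πL Q, LinearMap.mem_range_self πL Q⟩ = ev φ Q := hτ0 Q
    rw [show (⟨πL Q, LinearMap.mem_range_self πL Q⟩ : ↥Sm) = ⟨πL Q, ⟨Q, rfl⟩⟩ from rfl] at h1
    rw [h1, one_mul]
    exact hbd Q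
  set τ0C := LinearMap.mkContinuous τ0 1 hbound with hτ0C
  have hdr : DenseRange (⇑(Submodule.subtypeL Sm)) := by
    have h : Set.range (⇑(Submodule.subtypeL Sm)) = (Sm : Set A) := Subtype.range_coe
    rw [DenseRange, h]
    exact hdense
  have hui : IsUniformInducing (⇑(Submodule.subtypeL Sm)) :=
    isometry_subtype_coe.isUniformInducing
  set τC := τ0C.extend (Submodule.subtypeL Sm) with hτC
  have key : ∀ Q : NCPoly N, τC (πL Q) = ev φ Q := by
    intro Q
    have h1 : τC ((Submodule.subtypeL Sm) ⟨πL Q, LinearMap.mem_range_self πL Q⟩)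
        = τ0C ⟨πL Q, LinearMap.mem_range_self πL Q⟩ :=
      ContinuousLinearMap.extend_eq τ0C hdr hui _
    have h2 : (Submodule.subtypeL Sm) ⟨πL Q, LinearMap.mem_range_self πL Q⟩ = πL Q := rfl
    rw [h2] at h1
    rw [h1, hτ0C]; exact hτ0 Q
  have hπmul : ∀ Q Q' : NCPoly N, πL Q * πL Q' = πL (Q * Q') := fun Q Q' =>
    (_root_.map_mul (FreeAlgebra.lift ℂ x) Q Q').symm
  have hstar : ∀ Q : NCPoly N, star (πL Q) = πL (starP Q) := fun Q =>
    (lift_starP x hx Q).symm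
  -- traciality by density
  have hmulcomm : ∀ y z : A, τC (y * z) = τC (z * y) := by
    have hc1 : Continuous fun p : A × A => τC (p.1 * p.2) :=
      τC.continuous.comp (continuous_fst.mul continuous_snd)
    have hc2 : Continuous fun p : A × A => τC (p.2 * p.1) :=
      τC.continuous.comp (continuous_snd.mul continuous_fst)
    have heq : Set.EqOn (fun p : A × A => τC (p.1 * p.2)) (fun p : A × A => τC (p.2 * p.1))
        ((Sm : Set A) ×ˢ (Sm : Set A)) := by
      rintro ⟨y, z⟩ ⟨⟨Q, rfl⟩, ⟨Q', rfl⟩⟩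
      show τC (πL Q * πL Q') = τC (πL Q' * πL Q)
      rw [hπmul, hπmul, key, key]
      exact hcomm Q Q'
    have hd : Dense ((Sm : Set A) ×ˢ (Sm : Set A)) := hdense.prod hdense
    have hfg := hc1.ext_on hd hc2 heq
    intro y z
    exact congrFun hfg (y, z)
  -- positivity by density
  have hnonneg : ∀ z : A, 0 ≤ τC (star z * z) := by
    have hcl : IsClosed {z : A | 0 ≤ τC (star z * z)} := by
      have h : {z : A | 0 ≤ τC (star z * z)}
          = (fun z : A => τC (star z * z)) ⁻¹' {w : ℂ | 0 ≤ w} := rfl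
      rw [h]
      exact isClosed_nonneg.preimage (τC.continuous.comp (continuous_star.mul continuous_id))
    have hsub : (Sm : Set A) ⊆ {z : A | 0 ≤ τC (star z * z)} := by
      rintro z ⟨Q, rfl⟩
      show 0 ≤ τC (star (πL Q) * πL Q)
      rw [hstar, hπmul, key]
      exact hpos Q
    intro z
    have h2 : closure (Sm : Set A) ⊆ {z : A | 0 ≤ τC (star z * z)} :=
      closure_minimal hsub hcl
    exact h2 (by rw [hdense.closure_eq]; trivial)
  refine ⟨τC.toLinearMap, ⟨?_, ?_, ?_⟩, key⟩
  · show τC 1 = 1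
    have h1 : (1 : A) = πL 1 := (_root_.map_one (FreeAlgebra.lift ℂ x)).symm
    rw [h1, key, ev_one, hone]
  · exact hnonneg
  · exact hmulcomm

end Tracial

section Main
variable {A : Type*} [NormedRing A] [NormedAlgebra ℂ A] [StarRing A]
    [CStarRing A] [CompleteSpace A] [StarModule ℂ A] {n m : ℕ}

/-- Augment a family of test polynomials with the coordinate polynomials. -/
def augmentP {r : ℕ} (P : Fin r → NCPoly (n + m)) : Fin ((n + m) + r) → NCPoly (n + m) :=
  Fin.append (fun i => FreeAlgebra.ι ℂ i) P

/-- The tuple of matrices underlying a pair of tuples of self-adjoint matrices. -/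
def matT {k : ℕ} (CD : (Fin n → SA k) × (Fin m → SA k)) : Fin (n + m) → Mat k :=
  Fin.append (fun i => (CD.1 i).val) (fun j => (CD.2 j).val)

lemma matT_selfAdjoint {k : ℕ} (CD : (Fin n → SA k) × (Fin m → SA k)) (i : Fin (n + m)) :
    IsSelfAdjoint (matT CD i) := by
  refine Fin.addCases (motive := fun i => IsSelfAdjoint (matT CD i)) (fun i => ?_) (fun j => ?_) i
  · show IsSelfAdjoint (matT CD (Fin.castAdd m i))
    rw [show matT CD (Fin.castAdd m i) = (CD.1 i).val from Fin.append_left _ _ i]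
    exact (CD.1 i).isSA
  · show IsSelfAdjoint (matT CD (Fin.natAdd n j))
    rw [show matT CD (Fin.natAdd n j) = (CD.2 j).val from Fin.append_right _ _ j]
    exact (CD.2 j).isSA

lemma gammaTop_anti (a : Fin n → A) (b : Fin m → A) {k : ℕ} {ε ε' : ℝ} {r r' : ℕ}
    {P : Fin r → NCPoly (n + m)} {P' : Fin r' → NCPoly (n + m)} (hε : ε' ≤ ε)
    (hP : ∀ j : Fin r, ∃ j' : Fin r', P' j' = P j) :
    GammaTop a b k ε' P' ⊆ GammaTop a b k ε P := by
  intro CD h j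
  obtain ⟨j', hj'⟩ := hP j
  have := h j'
  rw [hj'] at this
  exact this.trans hε

lemma gammaTop_coord (a : Fin n → A) (b : Fin m → A) {k : ℕ} {ε : ℝ} {r : ℕ}
    {P : Fin r → NCPoly (n + m)} {CD : (Fin n → SA k) × (Fin m → SA k)}
    (h : CD ∈ GammaTop a b k ε (augmentP P)) (i : Fin (n + m)) :
    |opNorm (matT CD i) - ‖Fin.append a b i‖| ≤ ε := by
  have h1 := h (Fin.castAdd r i)
  rw [show augmentP P (Fin.castAdd r i) = FreeAlgebra.ι ℂ i from Fin.append_left _ _ i] at h1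
  have h2 : NCPoly.eval (FreeAlgebra.ι ℂ i) (matT CD) = matT CD i :=
    FreeAlgebra.lift_ι_apply _ _
  have h3 : NCPoly.eval (FreeAlgebra.ι ℂ i) (Fin.append a b) = Fin.append a b i :=
    FreeAlgebra.lift_ι_apply _ _
  rw [show (Fin.append (fun i => (CD.1 i).val) fun i => (CD.2 i).val) = matT CD from rfl] at h1
  rw [h2, h3] at h1
  exact h1

lemma gammaTop_normBound (a : Fin n → A) (b : Fin m → A) {k : ℕ} {ε : ℝ} {r : ℕ}
    {P : Fin r → NCPoly (n + m)} {CD : (Fin n → SA k) × (Fin m → SA k)}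
    (h : CD ∈ GammaTop a b k ε (augmentP P)) (hε : ε ≤ 1) {ρ : ℝ}
    (hρ : ∀ i : Fin (n + m), ‖Fin.append a b i‖ + 1 ≤ ρ) (i : Fin (n + m)) :
    opNorm (matT CD i) ≤ ρ := by
  have h1 := (abs_le.mp (gammaTop_coord a b h i)).2
  have := hρ i
  linarith

lemma gammaTop_poly (a : Fin n → A) (b : Fin m → A) {k : ℕ} {ε : ℝ} {r : ℕ}
    {P : Fin r → NCPoly (n + m)} {CD : (Fin n → SA k) × (Fin m → SA k)}
    (h : CD ∈ GammaTop a b k ε (augmentP P)) (j : Fin r) :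
    opNorm ((P j).eval (matT CD)) ≤ ‖(P j).eval (Fin.append a b)‖ + ε := by
  have h1 := h (Fin.natAdd (n + m) j)
  rw [show augmentP P (Fin.natAdd (n + m) j) = P j from Fin.append_right _ _ j] at h1
  rw [show (Fin.append (fun i => (CD.1 i).val) fun i => (CD.2 i).val) = matT CD from rfl] at h1
  linarith [(abs_le.mp h1).2]

/-- The set of moment functionals of norm-microstates. -/
def Mset (a : Fin n → A) (b : Fin m → A) (ε : ℝ)
    (P : Σ r : ℕ, Fin r → NCPoly (n + m)) : Set (List (Fin (n + m)) → ℂ) :=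
  {ψ | ∃ k : ℕ, 1 ≤ k ∧ ∃ CD : (Fin n → SA k) × (Fin m → SA k),
    CD ∈ GammaTop a b k ε (augmentP P.2) ∧ ψ = momFun k (matT CD)}

/-- Neighborhoods in the space of moment functions. -/
def Uset {N : ℕ} (φ : List (Fin N) → ℂ) (l : ℕ) (e : ℝ) : Set (List (Fin N) → ℂ) :=
  ⋂ (p : Fin (l + 1)) (w : Fin (p : ℕ) → Fin N),
    {ψ | ‖ψ (List.ofFn w) - φ (List.ofFn w)‖ < e}

lemma isOpen_Uset {N : ℕ} (φ : List (Fin N) → ℂ) (l : ℕ) (e : ℝ) : IsOpen (Uset φ l e) := by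
  refine isOpen_iInter_of_finite fun p => ?_
  refine isOpen_iInter_of_finite fun w => ?_
  have h : {ψ : List (Fin N) → ℂ | ‖ψ (List.ofFn w) - φ (List.ofFn w)‖ < e}
      = (fun ψ : List (Fin N) → ℂ => ψ (List.ofFn w)) ⁻¹' Metric.ball (φ (List.ofFn w)) e := by
    ext ψ
    simp [Metric.mem_ball, dist_eq_norm]
  rw [h]
  exact Metric.isOpen_ball.preimage
    (continuous_apply (A := fun _ : List (Fin N) => ℂ) (List.ofFn w))

lemma self_mem_Uset {N : ℕ} (φ : List (Fin N) → ℂ) (l : ℕ) {e : ℝ} (he : 0 < e) :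
    φ ∈ Uset φ l e := by
  refine Set.mem_iInter.mpr fun p => Set.mem_iInter.mpr fun w => ?_
  simpa using he

lemma mem_Uset {N : ℕ} {φ ψ : List (Fin N) → ℂ} {l : ℕ} {e : ℝ} (h : ψ ∈ Uset φ l e)
    {p : ℕ} (hp : p ≤ l) (w : Fin p → Fin N) :
    ‖ψ (List.ofFn w) - φ (List.ofFn w)‖ < e := by
  have h1 := Set.mem_iInter.mp h ⟨p, by omega⟩
  exact Set.mem_iInter.mp h1 w

end Main

section Dense
variable {A : Type*} [NormedRing A] [NormedAlgebra ℂ A] [StarRing A]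
    [CStarRing A] [CompleteSpace A] [StarModule ℂ A] {n m : ℕ}

lemma dense_range_lift (a : Fin n → A) (b : Fin m → A)
    (ha : ∀ i, IsSelfAdjoint (a i)) (hb : ∀ j, IsSelfAdjoint (b j))
    (hgen : (StarAlgebra.adjoin ℂ (Set.range a ∪ Set.range b)).topologicalClosure = ⊤) :
    Dense ((LinearMap.range
      (FreeAlgebra.lift ℂ (Fin.append a b) : NCPoly (n + m) →ₐ[ℂ] A).toLinearMap :
        Submodule ℂ A) : Set A) := by
  set π := (FreeAlgebra.lift ℂ (Fin.append a b) : NCPoly (n + m) →ₐ[ℂ] A) with hπ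
  have hrange : Set.range (Fin.append a b) = Set.range a ∪ Set.range b := by
    ext z
    constructor
    · rintro ⟨i, rfl⟩
      refine Fin.addCases (motive := fun i => Fin.append a b i ∈ Set.range a ∪ Set.range b)
        (fun i => ?_) (fun j => ?_) i
      · left
        exact ⟨i, (Fin.append_left a b i).symm⟩
      · right
        exact ⟨j, (Fin.append_right a b j).symm⟩
    · rintro (⟨i, rfl⟩ | ⟨j, rfl⟩)
      · exact ⟨Fin.castAdd m i, Fin.append_left a b i⟩
      · exact ⟨Fin.natAdd n j, Fin.append_right a b j⟩
  have hstarS : star (Set.range a ∪ Set.range b) = Set.range a ∪ Set.range b := by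
    ext z
    rw [Set.mem_star]
    constructor
    · rintro (⟨i, hi⟩ | ⟨j, hj⟩)
      · left
        refine ⟨i, ?_⟩
        have h1 := congrArg star hi
        rwa [star_star, ha i] at h1
      · right
        refine ⟨j, ?_⟩
        have h1 := congrArg star hj
        rwa [star_star, hb j] at h1
    · rintro (⟨i, hi⟩ | ⟨j, hj⟩)
      · left
        exact ⟨i, by rw [← hi, ha i]⟩
      · right
        exact ⟨j, by rw [← hj, hb j]⟩
  have hsub : (StarAlgebra.adjoin ℂ (Set.range a ∪ Set.range b)).toSubalgebra
      = Algebra.adjoin ℂ (Set.range a ∪ Set.range b) := by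
    rw [StarAlgebra.adjoin_toSubalgebra, hstarS, Set.union_self]
  have hAdj : ((Algebra.adjoin ℂ (Set.range (Fin.append a b)) : Subalgebra ℂ A) : Set A)
      = ((LinearMap.range π.toLinearMap : Submodule ℂ A) : Set A) := by
    apply Set.Subset.antisymm
    · intro z hz
      have hle : Algebra.adjoin ℂ (Set.range (Fin.append a b)) ≤ π.range := by
        apply Algebra.adjoin_le
        rintro _ ⟨i, rfl⟩
        exact ⟨FreeAlgebra.ι ℂ i, FreeAlgebra.lift_ι_apply _ _⟩
      obtain ⟨Q, hQ⟩ := hle hz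
      exact ⟨Q, hQ⟩
    · rintro _ ⟨Q, rfl⟩
      show π Q ∈ (Algebra.adjoin ℂ (Set.range (Fin.append a b)) : Subalgebra ℂ A)
      induction Q using FreeAlgebra.induction with
      | grade0 r =>
          rw [AlgHom.commutes]
          exact Subalgebra.algebraMap_mem _ r
      | grade1 i =>
          rw [hπ, FreeAlgebra.lift_ι_apply]
          exact Algebra.subset_adjoin ⟨i, rfl⟩
      | mul Q Q' hQ hQ' =>
          rw [_root_.map_mul]
          exact mul_mem hQ hQ'
      | add Q Q' hQ hQ' =>
          rw [_root_.map_add]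
          exact add_mem hQ hQ'
  have hclos : closure ((StarAlgebra.adjoin ℂ (Set.range a ∪ Set.range b) : Set A))
      = Set.univ := by
    have h1 := congrArg (fun S : StarSubalgebra ℂ A => (S : Set A)) hgen
    simpa using h1
  rw [dense_iff_closure_eq, ← hAdj, hrange]
  have h2 : ((Algebra.adjoin ℂ (Set.range a ∪ Set.range b) : Subalgebra ℂ A) : Set A)
      = ((StarAlgebra.adjoin ℂ (Set.range a ∪ Set.range b) : StarSubalgebra ℂ A) : Set A) := by
    rw [← hsub]
    rfl
  rw [h2, hclos]

end Dense

section Estimate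
variable {A : Type*} [NormedRing A] [NormedAlgebra ℂ A] [StarRing A]
    [CStarRing A] [CompleteSpace A] [StarModule ℂ A] {n m : ℕ}

lemma final_estimate (a : Fin n → A) (b : Fin m → A) (creal : ℝ) {ε₀ : ℝ} (hε₀ : 0 < ε₀)
    {r₀ : ℕ} (P₀ : Fin r₀ → NCPoly (n + m)) {ι : Type} (t : Finset ι) (R : ℝ)
    (τf : ι → (A →ₗ[ℂ] ℂ)) (lf : ι → ℕ) (ef : ι → ℝ)
    (hcov : ∀ k : ℕ, 1 ≤ k → GammaTopPres a b k ε₀ P₀ ⊆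
      ⋃ i ∈ t, GammaRPres R a b (τf i) k (lf i) (ef i))
    (hlim : ∀ i ∈ t, Filter.atTop.limsup (fun k : ℕ =>
      (↑(((k : ℝ) ^ 2)⁻¹) : EReal) *
          ENNReal.log (volume (GammaRPres R a b (τf i) k (lf i) (ef i)))
        + (↑((n : ℝ) / 2 * Real.log k) : EReal)) < (creal : EReal)) :
    chiTopPres a b ≤ (creal : EReal) := by
  set G : ℕ → EReal := fun k =>
    (↑(((k : ℝ) ^ 2)⁻¹) : EReal) * ENNReal.log (volume (GammaTopPres a b k ε₀ P₀))
      + (↑((n : ℝ) / 2 * Real.log k) : EReal) with hG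
  have h1 : chiTopPres a b ≤ Filter.atTop.limsup G := by
    rw [chiTopPres]
    exact iInf_le_of_le ε₀ (iInf_le_of_le hε₀ (iInf_le_of_le r₀ (iInf_le _ P₀)))
  set E : ℕ → ℝ≥0∞ := fun k =>
    ENNReal.ofReal (Real.exp ((creal - (n : ℝ) / 2 * Real.log k) * (k : ℝ) ^ 2)) with hE
  set bnd : ℕ → ℝ := fun k => ((k : ℝ) ^ 2)⁻¹ * Real.log t.card + creal with hbnd
  have hev : ∀ᶠ k : ℕ in Filter.atTop, G k ≤ ((bnd k : ℝ) : EReal) := by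
    have hforall : ∀ᶠ k : ℕ in Filter.atTop, ∀ i ∈ t, (fun k : ℕ =>
        (↑(((k : ℝ) ^ 2)⁻¹) : EReal) *
            ENNReal.log (volume (GammaRPres R a b (τf i) k (lf i) (ef i)))
          + (↑((n : ℝ) / 2 * Real.log k) : EReal)) k < (creal : EReal) :=
      (eventually_all_finset t).mpr fun i hi => eventually_lt_of_limsup_lt (hlim i hi)
    filter_upwards [hforall, Filter.eventually_ge_atTop 1] with k hFk hk
    -- notation
    have hkR : (0 : ℝ) < (k : ℝ) := by exact_mod_cast hk
    have hck : (0 : ℝ) < ((k : ℝ) ^ 2)⁻¹ := by positivity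
    have hckE : (0 : EReal) < (↑(((k : ℝ) ^ 2)⁻¹) : EReal) := by
      exact_mod_cast hck
    set dk : ℝ := (n : ℝ) / 2 * Real.log k with hdk
    -- volume bounds for each i
    have hvol : ∀ i ∈ t, volume (GammaRPres R a b (τf i) k (lf i) (ef i)) ≤ E k := by
      intro i hi
      set v := volume (GammaRPres R a b (τf i) k (lf i) (ef i)) with hv
      have hF := hFk i hi
      rcases eq_or_ne v 0 with h0 | h0
      · rw [h0]
        exact zero_le
      rcases eq_or_ne v ⊤ with hT | hT
      · exfalso
        rw [← hv, hT] at hF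
        rw [ENNReal.log_top, EReal.mul_top_of_pos hckE, EReal.top_add_coe] at hF
        exact not_top_lt hF
      · have hlog : ENNReal.log v = ((Real.log v.toReal : ℝ) : EReal) :=
          ENNReal.log_pos_real h0 hT
        rw [← hv, hlog, ← EReal.coe_mul, ← EReal.coe_add, EReal.coe_lt_coe_iff] at hF
        -- hF : ck * log v.toReal + dk < creal
        have hL : Real.log v.toReal < (creal - dk) * (k : ℝ) ^ 2 := by
          have hck' : ((k : ℝ) ^ 2)⁻¹ * Real.log v.toReal < creal - dk := by linarith
          have h2 := mul_lt_mul_of_pos_right hck' (by positivity : (0:ℝ) < (k : ℝ) ^ 2)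
          rw [mul_comm (((k : ℝ) ^ 2)⁻¹) _, mul_assoc, inv_mul_cancel₀ (by positivity),
            mul_one] at h2
          exact h2
        have hvpos : 0 < v.toReal := ENNReal.toReal_pos h0 hT
        have h3 : v.toReal < Real.exp ((creal - dk) * (k : ℝ) ^ 2) := by
          calc v.toReal = Real.exp (Real.log v.toReal) := (Real.exp_log hvpos).symm
          _ < _ := Real.exp_lt_exp.mpr hL
        calc v = ENNReal.ofReal v.toReal := (ENNReal.ofReal_toReal hT).symm
        _ ≤ E k := ENNReal.ofReal_le_ofReal h3.le
    -- total volume bound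
    have htot : volume (GammaTopPres a b k ε₀ P₀) ≤ (t.card : ℝ≥0∞) * E k := by
      calc volume (GammaTopPres a b k ε₀ P₀)
          ≤ volume (⋃ i ∈ t, GammaRPres R a b (τf i) k (lf i) (ef i)) :=
            measure_mono (hcov k hk)
      _ ≤ ∑ i ∈ t, volume (GammaRPres R a b (τf i) k (lf i) (ef i)) :=
            measure_biUnion_finset_le t _
      _ ≤ t.card • E k := Finset.sum_le_card_nsmul t _ _ hvol
      _ = (t.card : ℝ≥0∞) * E k := nsmul_eq_mul _ _
    rcases Nat.eq_zero_or_pos t.card with hcard | hcard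
    · -- empty cover: volume zero
      have hzero : volume (GammaTopPres a b k ε₀ P₀) = 0 := by
        rw [hcard] at htot
        simpa using htot
      rw [hG]
      show (↑(((k : ℝ) ^ 2)⁻¹) : EReal) * ENNReal.log (volume (GammaTopPres a b k ε₀ P₀))
          + (↑((n : ℝ) / 2 * Real.log k) : EReal) ≤ _
      rw [hzero, ENNReal.log_zero, EReal.mul_bot_of_pos hckE, EReal.bot_add]
      exact bot_le
    · have hcard' : (0 : ℝ) < (t.card : ℝ) := by exact_mod_cast hcard
      have hlogtot : ENNReal.log (volume (GammaTopPres a b k ε₀ P₀))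
          ≤ ((Real.log t.card + (creal - dk) * (k : ℝ) ^ 2 : ℝ) : EReal) := by
        refine (ENNReal.log_monotone htot).trans ?_
        rw [ENNReal.log_mul_add]
        have hc1 : ENNReal.log (t.card : ℝ≥0∞) = ((Real.log t.card : ℝ) : EReal) := by
          rw [← ENNReal.ofReal_natCast, ENNReal.log_ofReal_of_pos hcard']
        have hc2 : ENNReal.log (E k) = (((creal - dk) * (k : ℝ) ^ 2 : ℝ) : EReal) := by
          rw [hE]
          show ENNReal.log (ENNReal.ofReal _) = _
          rw [ENNReal.log_ofReal_of_pos (Real.exp_pos _), Real.log_exp]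
        rw [hc1, hc2, ← EReal.coe_add]
      have hGle : G k ≤ (↑(((k : ℝ) ^ 2)⁻¹) : EReal) *
          ((Real.log t.card + (creal - dk) * (k : ℝ) ^ 2 : ℝ) : EReal)
          + (↑((n : ℝ) / 2 * Real.log k) : EReal) := by
        rw [hG]
        refine add_le_add_left ?_ _
        exact mul_le_mul_of_nonneg_left hlogtot hckE.le
      refine hGle.trans ?_
      rw [← EReal.coe_mul, ← EReal.coe_add, EReal.coe_le_coe_iff]
      have hkne : ((k : ℝ) ^ 2) ≠ 0 := by positivity
      rw [hbnd]
      show ((k : ℝ) ^ 2)⁻¹ * (Real.log t.card + (creal - dk) * (k : ℝ) ^ 2) + dk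
          ≤ ((k : ℝ) ^ 2)⁻¹ * Real.log ↑t.card + creal
      field_simp
      ring_nf
      exact le_refl _
  have h2 : Filter.atTop.limsup G ≤ Filter.atTop.limsup (fun k => ((bnd k : ℝ) : EReal)) :=
    limsup_le_limsup hev
  have h3 : Filter.Tendsto (fun k : ℕ => bnd k) Filter.atTop (nhds creal) := by
    have hks : Filter.Tendsto (fun k : ℕ => ((k : ℝ) ^ 2)) Filter.atTop Filter.atTop :=
      (tendsto_pow_atTop (two_ne_zero)).comp tendsto_natCast_atTop_atTop
    have hinv : Filter.Tendsto (fun k : ℕ => ((k : ℝ) ^ 2)⁻¹) Filter.atTop (nhds 0) :=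
      hks.inv_tendsto_atTop
    have := (hinv.mul_const (Real.log t.card)).add_const creal
    simpa using this
  have h4 : Filter.atTop.limsup (fun k => ((bnd k : ℝ) : EReal)) = (creal : EReal) :=
    (EReal.tendsto_coe.mpr h3).limsup_eq
  exact h1.trans (h2.trans_eq h4)

end Estimate

section Infra
variable {A : Type*} [NormedRing A] [NormedAlgebra ℂ A] [StarRing A]
    [CStarRing A] [CompleteSpace A] [StarModule ℂ A] {n m : ℕ}

/-- The compact space of candidate moment functions. -/
def Xset (N : ℕ) (ρ : ℝ) : Set (List (Fin N) → ℂ) :=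
  Set.univ.pi fun w : List (Fin N) => Metric.closedBall (0 : ℂ) (ρ ^ w.length)

lemma mem_Xset {N : ℕ} {ρ : ℝ} {φ : List (Fin N) → ℂ} :
    φ ∈ Xset N ρ ↔ ∀ w : List (Fin N), ‖φ w‖ ≤ ρ ^ w.length := by
  simp [Xset, Set.mem_univ_pi, Metric.mem_closedBall, dist_zero_right]

lemma isClosed_Xset {N : ℕ} {ρ : ℝ} : IsClosed (Xset N ρ) :=
  isClosed_set_pi fun w _ => Metric.isClosed_closedBall

lemma isCompact_Xset {N : ℕ} {ρ : ℝ} : IsCompact (Xset N ρ) :=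
  isCompact_univ_pi fun w => isCompact_closedBall _ _

/-- The compact set of "admissible limit moment functions". -/
def Tset (a : Fin n → A) (b : Fin m → A) (ρ : ℝ) : Set (List (Fin (n + m)) → ℂ) :=
  Xset (n + m) ρ ∩ ({φ | φ [] = 1}
    ∩ ((⋂ Q : NCPoly (n + m), {φ | ‖ev φ Q‖ ≤ ‖FreeAlgebra.lift ℂ (Fin.append a b) Q‖})
    ∩ ((⋂ Q : NCPoly (n + m), ⋂ Q' : NCPoly (n + m), {φ | ev φ (Q * Q') = ev φ (Q' * Q)})
    ∩ (⋂ Q : NCPoly (n + m), {φ | 0 ≤ ev φ (starP Q * Q)}))))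

lemma mem_Tset {a : Fin n → A} {b : Fin m → A} {ρ : ℝ} {φ : List (Fin (n + m)) → ℂ} :
    φ ∈ Tset a b ρ ↔ φ ∈ Xset (n + m) ρ ∧ φ [] = 1
      ∧ (∀ Q : NCPoly (n + m), ‖ev φ Q‖ ≤ ‖FreeAlgebra.lift ℂ (Fin.append a b) Q‖)
      ∧ (∀ Q Q' : NCPoly (n + m), ev φ (Q * Q') = ev φ (Q' * Q))
      ∧ (∀ Q : NCPoly (n + m), 0 ≤ ev φ (starP Q * Q)) := by
  simp [Tset, Set.mem_iInter]

lemma isCompact_Tset {a : Fin n → A} {b : Fin m → A} {ρ : ℝ} : IsCompact (Tset a b ρ) := by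
  refine isCompact_Xset.inter_right ?_
  refine IsClosed.inter ?_ (IsClosed.inter ?_ (IsClosed.inter ?_ ?_))
  · exact isClosed_eq (continuous_apply ([] : List (Fin (n + m)))) continuous_const
  · exact isClosed_iInter fun Q => isClosed_le (continuous_ev Q).norm continuous_const
  · exact isClosed_iInter fun Q => isClosed_iInter fun Q' =>
      isClosed_eq (continuous_ev _) (continuous_ev _)
  · exact isClosed_iInter fun Q => isClosed_nonneg.preimage (continuous_ev _)

lemma chiPres_lt_data (a : Fin n → A) (b : Fin m → A) (τ : A →ₗ[ℂ] ℂ) {c : EReal} {R : ℝ}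
    (hR : 0 < R) (hc : chiPres a b τ < c) (hctop : c ≠ ⊤) :
    ∃ (l : ℕ) (e : ℝ), 0 < e ∧ Filter.atTop.limsup (fun k : ℕ =>
      (↑(((k : ℝ) ^ 2)⁻¹) : EReal) * ENNReal.log (volume (GammaRPres R a b τ k l e))
        + (↑((n : ℝ) / 2 * Real.log k) : EReal)) < c := by
  have h1 : (⨅ (l : ℕ) (ε : ℝ) (_ : 0 < ε), Filter.atTop.limsup (fun k : ℕ =>
      (↑(((k : ℝ) ^ 2)⁻¹) : EReal) * ENNReal.log (volume (GammaRPres R a b τ k l ε))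
        + (↑((n : ℝ) / 2 * Real.log k) : EReal))) < c := by
    refine lt_of_le_of_lt ?_ hc
    rw [chiPres]
    exact le_iSup₂ (f := fun (R : ℝ) (_ : 0 < R) => ⨅ (l : ℕ) (ε : ℝ) (_ : 0 < ε),
      Filter.atTop.limsup fun k : ℕ =>
        (↑(((k : ℝ) ^ 2)⁻¹) : EReal) * ENNReal.log (volume (GammaRPres R a b τ k l ε))
          + (↑((n : ℝ) / 2 * Real.log k) : EReal)) R hR
  obtain ⟨l, hl⟩ := iInf_lt_iff.mp h1
  obtain ⟨e, he⟩ := iInf_lt_iff.mp hl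
  by_cases hepos : 0 < e
  · refine ⟨l, e, hepos, ?_⟩
    rwa [iInf_pos hepos] at he
  · exfalso
    rw [iInf_neg hepos] at he
    exact not_top_lt he

end Infra

section MainProof
variable {A : Type*} [NormedRing A] [NormedAlgebra ℂ A] [StarRing A]
    [CStarRing A] [CompleteSpace A] [StarModule ℂ A] {n m : ℕ}

theorem main (a : Fin n → A) (b : Fin m → A)
    (ha : ∀ i, IsSelfAdjoint (a i)) (hb : ∀ j, IsSelfAdjoint (b j))
    (hgen : (StarAlgebra.adjoin ℂ (Set.range a ∪ Set.range b)).topologicalClosure = ⊤) :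
    chiTopPres a b ≤ kappaPres a b := by
  by_contra hcon
  rw [not_le] at hcon
  obtain ⟨c, hc1, hc2⟩ := exists_between hcon
  have hctop : c ≠ ⊤ := (hc2.trans_le le_top).ne
  have hcbot : c ≠ ⊥ := (bot_le.trans_lt hc1).ne'
  lift c to ℝ using ⟨hctop, hcbot⟩ with creal
  have hxsa : ∀ i, IsSelfAdjoint (Fin.append a b i) := by
    intro i
    refine Fin.addCases (motive := fun i => IsSelfAdjoint (Fin.append a b i))
      (fun i => ?_) (fun j => ?_) i
    · show IsSelfAdjoint (Fin.append a b (Fin.castAdd m i))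
      rw [show Fin.append a b (Fin.castAdd m i) = a i from Fin.append_left a b i]
      exact ha i
    · show IsSelfAdjoint (Fin.append a b (Fin.natAdd n j))
      rw [show Fin.append a b (Fin.natAdd n j) = b j from Fin.append_right a b j]
      exact hb j
  set ρ : ℝ := 1 + ((∑ i, ‖a i‖) + ∑ j, ‖b j‖) with hρdef
  have hρ1 : (1 : ℝ) ≤ ρ := by
    have : (0:ℝ) ≤ (∑ i, ‖a i‖) + ∑ j, ‖b j‖ := by positivity
    rw [hρdef]; linarith
  have hρpos : (0 : ℝ) < ρ := lt_of_lt_of_le one_pos hρ1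
  have hρx : ∀ i : Fin (n + m), ‖Fin.append a b i‖ + 1 ≤ ρ := by
    intro i
    refine Fin.addCases (motive := fun i => ‖Fin.append a b i‖ + 1 ≤ ρ)
      (fun i => ?_) (fun j => ?_) i
    · show ‖Fin.append a b (Fin.castAdd m i)‖ + 1 ≤ ρ
      rw [show Fin.append a b (Fin.castAdd m i) = a i from Fin.append_left a b i, hρdef]
      have h2 : ‖a i‖ ≤ ∑ i', ‖a i'‖ :=
        Finset.single_le_sum (fun i' _ => norm_nonneg (a i')) (Finset.mem_univ i)
      have h3 : (0:ℝ) ≤ ∑ j', ‖b j'‖ := by positivity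
      linarith
    · show ‖Fin.append a b (Fin.natAdd n j)‖ + 1 ≤ ρ
      rw [show Fin.append a b (Fin.natAdd n j) = b j from Fin.append_right a b j, hρdef]
      have h2 : ‖b j‖ ≤ ∑ j', ‖b j'‖ :=
        Finset.single_le_sum (fun j' _ => norm_nonneg (b j')) (Finset.mem_univ j)
      have h3 : (0:ℝ) ≤ ∑ i', ‖a i'‖ := by positivity
      linarith
  have hdense := dense_range_lift a b ha hb hgen
  -- tracial states and microstate data attached to admissible moment functions
  have hchoice : ∀ i : {φ : List (Fin (n + m)) → ℂ // φ ∈ Tset a b ρ},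
      ∃ (τ : A →ₗ[ℂ] ℂ) (l : ℕ) (e : ℝ),
      (∀ Q : NCPoly (n + m), τ (FreeAlgebra.lift ℂ (Fin.append a b) Q) = ev (i : _) Q)
      ∧ 0 < e
      ∧ Filter.atTop.limsup (fun k : ℕ =>
          (↑(((k : ℝ) ^ 2)⁻¹) : EReal) * ENNReal.log (volume (GammaRPres ρ a b τ k l e))
            + (↑((n : ℝ) / 2 * Real.log k) : EReal)) < ((creal : ℝ) : EReal) := by
    rintro ⟨φ, hφ⟩
    rw [mem_Tset] at hφ
    obtain ⟨hX, hone, hbd, hcm, hps⟩ := hφ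
    obtain ⟨τ, hτ, hτev⟩ := exists_tracial (Fin.append a b) hxsa hdense φ hone hbd hcm hps
    have hkap : chiPres a b τ ≤ kappaPres a b :=
      le_iSup₂ (f := fun (τ' : A →ₗ[ℂ] ℂ) (_ : IsTracialState τ') => chiPres a b τ') τ hτ
    obtain ⟨l, e, hepos, hlim⟩ := chiPres_lt_data a b τ hρpos (lt_of_le_of_lt hkap hc1)
      (EReal.coe_ne_top creal)
    exact ⟨τ, l, e, hτev, hepos, hlim⟩
  choose τf lf ef hτev hepos hlim using hchoice
  set U : {φ : List (Fin (n + m)) → ℂ // φ ∈ Tset a b ρ} → Set (List (Fin (n + m)) → ℂ) :=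
    fun i => Uset (i : _) (lf i) (ef i) with hUdef
  have hTcover : Tset a b ρ ⊆ ⋃ i, U i := fun φ hφ =>
    Set.mem_iUnion.mpr ⟨⟨φ, hφ⟩, self_mem_Uset _ _ (hepos _)⟩
  obtain ⟨t, ht⟩ := isCompact_Tset.elim_finite_subcover U (fun i => isOpen_Uset _ _ _) hTcover
  have hUopen : IsOpen (⋃ i ∈ t, U i) := isOpen_biUnion fun i _ => isOpen_Uset _ _ _
  have hMX : ∀ (e : ℝ), e ≤ 1 → ∀ P : Σ r : ℕ, Fin r → NCPoly (n + m),
      Mset a b e P ⊆ Xset (n + m) ρ := by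
    rintro e he1 P ψ ⟨k, hk, CD, hCD, rfl⟩
    rw [mem_Xset]
    exact momFun_bound hk hρ1 (matT CD) (gammaTop_normBound a b hCD he1 hρx)
  by_cases hex : ∃ ε₀ : ℝ, (0 < ε₀ ∧ ε₀ ≤ 1) ∧
      ∃ P₀ : Σ r : ℕ, Fin r → NCPoly (n + m), Mset a b ε₀ P₀ ⊆ ⋃ i ∈ t, U i
  · obtain ⟨ε₀, ⟨hε₀pos, hε₀le⟩, P₀, hMU⟩ := hex
    have hcov : ∀ k : ℕ, 1 ≤ k → GammaTopPres a b k ε₀ (augmentP P₀.2) ⊆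
        ⋃ i ∈ t, GammaRPres ρ a b (τf i) k (lf i) (ef i) := by
      intro k hk C hC
      obtain ⟨CD, hCD, rfl⟩ := hC
      have hψ : momFun k (matT CD) ∈ Mset a b ε₀ P₀ := ⟨k, hk, CD, hCD, rfl⟩
      obtain ⟨i, hit, hiU⟩ := Set.mem_iUnion₂.mp (hMU hψ)
      refine Set.mem_iUnion₂.mpr ⟨i, hit, ⟨CD, ⟨?_, ?_, ?_⟩, rfl⟩⟩
      · intro i'
        have h5 := gammaTop_normBound a b hCD hε₀le hρx (Fin.castAdd m i')
        rwa [show matT CD (Fin.castAdd m i') = (CD.1 i').val from Fin.append_left _ _ i'] at h5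
      · intro j'
        have h5 := gammaTop_normBound a b hCD hε₀le hρx (Fin.natAdd n j')
        rwa [show matT CD (Fin.natAdd n j') = (CD.2 j').val from Fin.append_right _ _ j'] at h5
      · intro p hp1 hp2 w
        have hτw : τf i (wordProd (Fin.append a b) w)
            = (i : List (Fin (n + m)) → ℂ) (List.ofFn w) := by
          have h1 : FreeAlgebra.lift ℂ (Fin.append a b) (wordElem (List.ofFn w))
              = wordProd (Fin.append a b) w := by
            rw [lift_wordElem, listProd_ofFn]
          rw [← h1, hτev i, ev_wordElem]
        have hμw : (k : ℂ)⁻¹ * Matrix.trace (wordProd (matT CD) w)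
            = momFun k (matT CD) (List.ofFn w) := by
          rw [momFun, listProd_ofFn]
        show ‖(k : ℂ)⁻¹ * Matrix.trace
            (wordProd (Fin.append (fun i => (CD.1 i).val) fun j => (CD.2 j).val) w)
          - τf i (wordProd (Fin.append a b) w)‖ ≤ ef i
        rw [show (Fin.append (fun i => (CD.1 i).val) fun j => (CD.2 j).val) = matT CD from rfl,
          hμw, hτw]
        exact (mem_Uset hiU hp2 w).le
    have hfin := final_estimate a b creal hε₀pos (augmentP P₀.2) t ρ τf lf ef hcov
      (fun i _ => hlim i)
    exact absurd (hfin.trans_lt hc2) (lt_irrefl _)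
  · -- compactness: produce a limit moment function not covered, lying in `Tset`
    have hnotsub : ∀ (e : ℝ), 0 < e → e ≤ 1 → ∀ P : Σ r : ℕ, Fin r → NCPoly (n + m),
        ∃ ψ, ψ ∈ Mset a b e P ∧ ψ ∉ ⋃ i ∈ t, U i := by
      intro e he0 he1 P
      have h1 : ¬ Mset a b e P ⊆ ⋃ i ∈ t, U i := fun hsub => hex ⟨e, ⟨he0, he1⟩, P, hsub⟩
      exact Set.not_subset.mp h1
    set K : ({e : ℝ // 0 < e ∧ e ≤ 1} × (Σ r : ℕ, Fin r → NCPoly (n + m))) →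
        Set (List (Fin (n + m)) → ℂ) := fun j =>
      closure (Mset a b j.1.1 j.2 ∩ (⋃ i ∈ t, U i)ᶜ) with hKdef
    have hKsubX : ∀ j, K j ⊆ Xset (n + m) ρ := fun j =>
      closure_minimal (Set.inter_subset_left.trans (hMX _ j.1.2.2 j.2)) isClosed_Xset
    have hKne : ∀ j, (K j).Nonempty := by
      rintro ⟨⟨e, he⟩, P⟩
      obtain ⟨ψ, hψM, hψU⟩ := hnotsub e he.1 he.2 P
      exact ⟨ψ, subset_closure ⟨hψM, hψU⟩⟩
    have hManti : ∀ (e₁ e₂ e₃ : ℝ) (_ : e₃ ≤ e₁) (r₁ r₂ : ℕ) (P₁ : Fin r₁ → NCPoly (n + m))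
        (P₂ : Fin r₂ → NCPoly (n + m))
        (hP : ∀ j : Fin ((n + m) + r₁), ∃ j', augmentP (Fin.append P₁ P₂) j' = augmentP P₁ j),
        Mset a b e₃ ⟨r₁ + r₂, Fin.append P₁ P₂⟩ ⊆ Mset a b e₁ ⟨r₁, P₁⟩ := by
      rintro e₁ e₂ e₃ he r₁ r₂ P₁ P₂ hP ψ ⟨k, hk, CD, hCD, rfl⟩
      exact ⟨k, hk, CD, gammaTop_anti a b he hP hCD, rfl⟩
    have hJne : Nonempty ({e : ℝ // 0 < e ∧ e ≤ 1} × (Σ r : ℕ, Fin r → NCPoly (n + m))) :=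
      ⟨(⟨1, ⟨one_pos, le_refl 1⟩⟩, ⟨0, Fin.elim0⟩)⟩
    have hKdir : Directed (· ⊇ ·) K := by
      rintro ⟨⟨e₁, he₁⟩, ⟨r₁, P₁⟩⟩ ⟨⟨e₂, he₂⟩, ⟨r₂, P₂⟩⟩
      refine ⟨(⟨min e₁ e₂, ⟨lt_min he₁.1 he₂.1, (min_le_left _ _).trans he₁.2⟩⟩,
        ⟨r₁ + r₂, Fin.append P₁ P₂⟩), ?_, ?_⟩
      · refine closure_mono (Set.inter_subset_inter_left _ ?_)
        refine hManti e₁ e₂ _ (min_le_left _ _) r₁ r₂ P₁ P₂ ?_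
        intro j
        refine Fin.addCases (motive := fun j =>
          ∃ j', augmentP (Fin.append P₁ P₂) j' = augmentP P₁ j) (fun i => ?_) (fun jj => ?_) j
        · refine ⟨Fin.castAdd (r₁ + r₂) i, ?_⟩
          rw [show augmentP (Fin.append P₁ P₂) (Fin.castAdd (r₁ + r₂) i)
                = FreeAlgebra.ι ℂ i from Fin.append_left _ _ i,
            show augmentP P₁ (Fin.castAdd r₁ i) = FreeAlgebra.ι ℂ i from Fin.append_left _ _ i]
        · refine ⟨Fin.natAdd (n + m) (Fin.castAdd r₂ jj), ?_⟩
          rw [show augmentP (Fin.append P₁ P₂) (Fin.natAdd (n + m) (Fin.castAdd r₂ jj))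
                = Fin.append P₁ P₂ (Fin.castAdd r₂ jj) from Fin.append_right _ _ _,
            show Fin.append P₁ P₂ (Fin.castAdd r₂ jj) = P₁ jj from Fin.append_left _ _ jj,
            show augmentP P₁ (Fin.natAdd (n + m) jj) = P₁ jj from Fin.append_right _ _ jj]
      · refine closure_mono (Set.inter_subset_inter_left _ ?_)
        have hcomm : Mset a b (min e₁ e₂) ⟨r₁ + r₂, Fin.append P₁ P₂⟩
            ⊆ Mset a b e₂ ⟨r₂, P₂⟩ := by
          rintro ψ ⟨k, hk, CD, hCD, rfl⟩
          refine ⟨k, hk, CD, gammaTop_anti a b (min_le_right _ _) ?_ hCD, rfl⟩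
          intro j
          refine Fin.addCases (motive := fun j =>
            ∃ j', augmentP (Fin.append P₁ P₂) j' = augmentP P₂ j) (fun i => ?_) (fun jj => ?_) j
          · refine ⟨Fin.castAdd (r₁ + r₂) i, ?_⟩
            rw [show augmentP (Fin.append P₁ P₂) (Fin.castAdd (r₁ + r₂) i)
                  = FreeAlgebra.ι ℂ i from Fin.append_left _ _ i,
              show augmentP P₂ (Fin.castAdd r₂ i) = FreeAlgebra.ι ℂ i from Fin.append_left _ _ i]
          · refine ⟨Fin.natAdd (n + m) (Fin.natAdd r₁ jj), ?_⟩
            rw [show augmentP (Fin.append P₁ P₂) (Fin.natAdd (n + m) (Fin.natAdd r₁ jj))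
                  = Fin.append P₁ P₂ (Fin.natAdd r₁ jj) from Fin.append_right _ _ _,
              show Fin.append P₁ P₂ (Fin.natAdd r₁ jj) = P₂ jj from Fin.append_right _ _ jj,
              show augmentP P₂ (Fin.natAdd (n + m) jj) = P₂ jj from Fin.append_right _ _ jj]
        exact hcomm
    obtain ⟨φs, hφs⟩ := IsCompact.nonempty_iInter_of_directed_nonempty_isCompact_isClosed K hKdir
      hKne (fun j => IsCompact.of_isClosed_subset isCompact_Xset isClosed_closure (hKsubX j))
      (fun j => isClosed_closure)
    have hφsK : ∀ j, φs ∈ K j := fun j => Set.mem_iInter.mp hφs j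
    have hmemS : ∀ (j : {e : ℝ // 0 < e ∧ e ≤ 1} × (Σ r : ℕ, Fin r → NCPoly (n + m)))
        (S : Set (List (Fin (n + m)) → ℂ)), IsClosed S → Mset a b j.1.1 j.2 ⊆ S → φs ∈ S :=
      fun j S hS hsub => (closure_minimal (Set.inter_subset_left.trans hsub) hS) (hφsK j)
    set j0 : {e : ℝ // 0 < e ∧ e ≤ 1} × (Σ r : ℕ, Fin r → NCPoly (n + m)) :=
      (⟨1, ⟨one_pos, le_refl 1⟩⟩, ⟨0, Fin.elim0⟩) with hj0
    have hφsX : φs ∈ Xset (n + m) ρ := hKsubX j0 (hφsK j0)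
    have hφone : φs [] = 1 := by
      refine hmemS j0 {ψ | ψ [] = 1}
        (isClosed_eq (continuous_apply ([] : List (Fin (n + m)))) continuous_const) ?_
      rintro ψ ⟨k, hk, CD, _, rfl⟩
      exact momFun_nil hk _
    have hφcomm : ∀ Q Q' : NCPoly (n + m), ev φs (Q * Q') = ev φs (Q' * Q) := by
      intro Q Q'
      refine hmemS j0 {ψ | ev ψ (Q * Q') = ev ψ (Q' * Q)}
        (isClosed_eq (continuous_ev _) (continuous_ev _)) ?_
      rintro ψ ⟨k, hk, CD, _, rfl⟩
      exact ev_momFun_comm k _ Q Q'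
    have hφpos : ∀ Q : NCPoly (n + m), 0 ≤ ev φs (starP Q * Q) := by
      intro Q
      refine hmemS j0 {ψ | 0 ≤ ev ψ (starP Q * Q)}
        (isClosed_nonneg.preimage (continuous_ev _)) ?_
      rintro ψ ⟨k, hk, CD, _, rfl⟩
      exact ev_momFun_nonneg k _ (matT_selfAdjoint CD) Q
    have hφbd : ∀ Q : NCPoly (n + m),
        ‖ev φs Q‖ ≤ ‖FreeAlgebra.lift ℂ (Fin.append a b) Q‖ := by
      intro Q
      refine le_of_forall_pos_le_add ?_
      intro ε hε
      have hη : 0 < min ε 1 ∧ min ε 1 ≤ 1 := ⟨lt_min hε one_pos, min_le_right _ _⟩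
      have h6 : φs ∈ {ψ : List (Fin (n + m)) → ℂ |
          ‖ev ψ Q‖ ≤ ‖FreeAlgebra.lift ℂ (Fin.append a b) Q‖ + min ε 1} := by
        refine hmemS (⟨min ε 1, hη⟩, ⟨1, fun _ => Q⟩) _
          (isClosed_le (continuous_ev Q).norm continuous_const) ?_
        rintro ψ ⟨k, hk, CD, hCD, rfl⟩
        refine (abs_ev_momFun_le hk (matT CD) Q).trans ?_
        exact gammaTop_poly a b hCD (0 : Fin 1)
      have h7 : min ε 1 ≤ ε := min_le_left _ _
      have h8 := h6
      simp only [Set.mem_setOf_eq] at h8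
      linarith
    have hφsT : φs ∈ Tset a b ρ := mem_Tset.mpr ⟨hφsX, hφone, hφbd, hφcomm, hφpos⟩
    have hnotU : φs ∉ ⋃ i ∈ t, U i := by
      have h1 : K j0 ⊆ (⋃ i ∈ t, U i)ᶜ :=
        closure_minimal Set.inter_subset_right hUopen.isClosed_compl
      exact h1 (hφsK j0)
    exact hnotU (ht hφsT)

end MainProof

end Entropy0

/-- If the unital C*-algebra `A` is generated by the self-adjoint elements
`a₁,…,aₙ,b₁,…,bₘ`, then the topological free entropy of `a₁,…,aₙ` in the presence of
`b₁,…,bₘ` is at most the corresponding free capacity. -/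
theorem chiTopPres_le_kappaPres {A : Type*} [NormedRing A] [NormedAlgebra ℂ A] [StarRing A]
    [CStarRing A] [CompleteSpace A] [StarModule ℂ A] {n m : ℕ}
    (a : Fin n → A) (b : Fin m → A)
    (ha : ∀ i, IsSelfAdjoint (a i)) (hb : ∀ j, IsSelfAdjoint (b j))
    (hgen : (StarAlgebra.adjoin ℂ (Set.range a ∪ Set.range b)).topologicalClosure = ⊤) :
    chiTopPres a b ≤ kappaPres a b := by
  exact Entropy0.main a b ha hb hgen
end
end

section
/- Let A be a unital C*-algebra generated by self-adjoint elements a₁,…,aₙ,b₁,…,bₘ. Then the free capacity is subadditive: κ(a₁,…,aₙ,b₁,…,bₘ) ≤ κ(a₁,…,aₙ : b₁,…,bₘ) + κ(b₁,…,bₘ : a₁,…,aₙ) ≤ κ(a₁,…,aₙ) + κ(b₁,…,bₘ), where κ(a₁,…,aₙ) denotes the free capacity of a₁,…,aₙ as generators of the C*-subalgebra C*(a₁,…,aₙ) ⊆ A, and similarly for κ(b₁,…,bₘ). -/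
open scoped ComplexOrder
open Matrix MeasureTheory Filter
open scoped ENNReal NNReal
noncomputable section

/-! ### Auxiliary material for the proof of subadditivity of the free capacity -/

section KappaAux

open Filter MeasureTheory

/-! #### EReal helpers -/

lemma EReal.coe_mul_add_le (r : ℝ) (hr : 0 ≤ r) (x y : EReal) :
    (r : EReal) * (x + y) ≤ (r : EReal) * x + (r : EReal) * y := by
  rcases hr.eq_or_lt with rfl | hr
  · simp
  · have hr' : (0 : EReal) < (r : EReal) := EReal.coe_pos.2 hr
    induction x with
    | bot => simp only [EReal.bot_add, EReal.mul_bot_of_pos hr']; exact bot_le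
    | top =>
      induction y with
      | bot => simp only [EReal.add_bot, EReal.mul_bot_of_pos hr']; exact bot_le
      | coe y =>
        rw [EReal.top_add_of_ne_bot (EReal.coe_ne_bot y), EReal.mul_top_of_pos hr',
          ← EReal.coe_mul, EReal.top_add_of_ne_bot (EReal.coe_ne_bot _)]
      | top =>
        rw [EReal.top_add_top, EReal.mul_top_of_pos hr', EReal.top_add_top]
    | coe x =>
      induction y with
      | bot => simp only [EReal.add_bot, EReal.mul_bot_of_pos hr']; exact bot_le
      | coe y =>
        rw [← EReal.coe_add, ← EReal.coe_mul, ← EReal.coe_mul, ← EReal.coe_mul, ← EReal.coe_add,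
          EReal.coe_le_coe_iff]
        exact le_of_eq (mul_add r x y)
      | top =>
        rw [EReal.add_top_of_ne_bot (EReal.coe_ne_bot x), EReal.mul_top_of_pos hr',
          ← EReal.coe_mul, EReal.add_top_of_ne_bot (EReal.coe_ne_bot _)]

/-! #### `Fin` and `wordProd` helpers -/

/-- The block swap `Fin (M + N) → Fin (N + M)`. -/
def finSwap (M N : ℕ) : Fin (M + N) → Fin (N + M) :=
  Fin.addCases (fun j => Fin.natAdd N j) (fun j => Fin.castAdd M j)

lemma append_finSwap {α : Type*} {M N : ℕ} (x : Fin N → α) (y : Fin M → α) (i : Fin (M + N)) :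
    Fin.append x y (finSwap M N i) = Fin.append y x i := by
  induction i using Fin.addCases with
  | left j => simp [finSwap, Fin.append_left, Fin.append_right]
  | right j => simp [finSwap, Fin.append_left, Fin.append_right]

lemma wordProd_congr {β : Type*} [Monoid β] {p N N' : ℕ} {f : Fin N → β} {g : Fin N' → β}
    {w : Fin p → Fin N} {w' : Fin p → Fin N'} (h : ∀ i, f (w i) = g (w' i)) :
    wordProd f w = wordProd g w' := by
  have hfg : (fun i => f (w i)) = fun i => g (w' i) := funext h
  simp only [wordProd, hfg]

lemma wordProd_swap {β : Type*} [Monoid β] {M N p : ℕ} (x : Fin N → β) (y : Fin M → β)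
    (w : Fin p → Fin (M + N)) :
    wordProd (Fin.append y x) w = wordProd (Fin.append x y) (fun i => finSwap M N (w i)) :=
  wordProd_congr fun i => (append_finSwap x y (w i)).symm

lemma map_wordProd {β γ : Type*} [Monoid β] [Monoid γ] (φ : β →* γ) {p N : ℕ}
    (f : Fin N → β) (w : Fin p → Fin N) :
    φ (wordProd f w) = wordProd (fun i => φ (f i)) w := by
  rw [wordProd, map_list_prod, List.map_ofFn]
  rfl

lemma append_zero_apply {α : Type*} {N : ℕ} (u : Fin N → α) (v : Fin 0 → α) (i : Fin (N + 0)) :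
    Fin.append u v i = u i := by
  have hv : v = Fin.elim0 := funext fun j => j.elim0
  rw [hv, Fin.append_elim0]
  rfl

lemma append_recomb {α : Type*} {n m : ℕ} (f : Fin (n + m) → α) (i : Fin (n + m)) :
    Fin.append (fun i => f (Fin.castAdd m i)) (fun j => f (Fin.natAdd n j)) i = f i :=
  congrFun Fin.append_castAdd_natAdd i

end KappaAux
section KappaGeom

open Filter MeasureTheory

lemma SA.nontrivial_of_pos {k : ℕ} (hk : 0 < k) : Nontrivial (SA k) := by
  refine ⟨⟨⟨(1 : Mat k), star_one _⟩, 0, fun h => ?_⟩⟩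
  have h0 : (1 : Mat k) = (0 : Mat k) := congrArg SA.val h
  have h1 := congrFun (congrFun h0 ⟨0, hk⟩) ⟨0, hk⟩
  simp [Matrix.one_apply] at h1

/-- Decomposition of a complex matrix into self-adjoint real and imaginary parts, as a real
linear equivalence. -/
def matDecomp (k : ℕ) : (SA k × SA k) ≃ₗ[ℝ] Mat k where
  toFun P := P.1.val + Complex.I • P.2.val
  map_add' P Q := by
    show (P.1.val + Q.1.val) + Complex.I • (P.2.val + Q.2.val) = _
    rw [smul_add]
    abel_nf
  map_smul' r P := by
    show (r • P.1.val) + Complex.I • (r • P.2.val) = r • (P.1.val + Complex.I • P.2.val)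
    rw [smul_comm Complex.I r, smul_add]
  invFun M :=
    (⟨(2:ℂ)⁻¹ • (M + star M), by
      rw [star_smul, star_add, star_star]
      simp only [star_inv₀, star_ofNat]
      rw [add_comm]⟩,
     ⟨(2:ℂ)⁻¹ • (Complex.I • (star M - M)), by
      rw [star_smul, star_smul, star_sub, star_star]
      simp only [star_inv₀, star_ofNat, Complex.star_def, Complex.conj_I]
      module⟩)
  right_inv M := by
    show (2:ℂ)⁻¹ • (M + star M) + Complex.I • ((2:ℂ)⁻¹ • (Complex.I • (star M - M))) = M
    rw [smul_smul, smul_smul,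
      show Complex.I * (2:ℂ)⁻¹ * Complex.I = -(2:ℂ)⁻¹ by
        rw [show Complex.I * (2:ℂ)⁻¹ * Complex.I = (2:ℂ)⁻¹ * (Complex.I * Complex.I) from by
          ring, Complex.I_mul_I]; ring]
    module
  left_inv P := by
    obtain ⟨⟨X, hX⟩, ⟨Y, hY⟩⟩ := P
    have hstar : star (X + Complex.I • Y) = X - Complex.I • Y := by
      rw [star_add, star_smul, hX, hY, Complex.star_def, Complex.conj_I, neg_smul,
        sub_eq_add_neg]
    refine Prod.ext (SA.ext ?_) (SA.ext ?_)
    · show (2:ℂ)⁻¹ • ((X + Complex.I • Y) + star (X + Complex.I • Y)) = X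
      rw [hstar]
      module
    · show (2:ℂ)⁻¹ • (Complex.I • (star (X + Complex.I • Y) - (X + Complex.I • Y))) = Y
      rw [hstar]
      have h2 : (X - Complex.I • Y) - (X + Complex.I • Y) = (-(2 * Complex.I)) • Y := by
        module
      rw [h2, smul_smul, smul_smul,
        show (2:ℂ)⁻¹ * Complex.I * -(2 * Complex.I) = 1 by
          rw [show (2:ℂ)⁻¹ * Complex.I * -(2 * Complex.I) =
            -((2:ℂ)⁻¹ * 2 * (Complex.I * Complex.I)) from by ring, Complex.I_mul_I]
          norm_num,
        one_smul]

lemma finrank_SA (k : ℕ) : Module.finrank ℝ (SA k) = k ^ 2 := by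
  have h := LinearEquiv.finrank_eq (matDecomp k)
  rw [Module.finrank_prod] at h
  have h2 : Module.finrank ℝ (Mat k) = 2 * k ^ 2 := by
    rw [Module.finrank_matrix]
    simp only [Fintype.card_fin, Complex.finrank_real_complex]
    ring
  rw [h2] at h
  omega

lemma sum_col_sq_le {k : ℕ} (M : Mat k) {R : ℝ} (h : opNorm M ≤ R) (i : Fin k) :
    ∑ j, Complex.normSq (M j i) ≤ R ^ 2 := by
  set T := Matrix.toEuclideanCLM (𝕜 := ℂ) M with hT
  have h1 : ‖T (EuclideanSpace.single i (1:ℂ))‖ ≤ R := by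
    calc ‖T (EuclideanSpace.single i (1:ℂ))‖ ≤ ‖T‖ * ‖EuclideanSpace.single i (1:ℂ)‖ :=
          T.le_opNorm _
      _ = ‖T‖ := by rw [EuclideanSpace.norm_single, norm_one, mul_one]
      _ ≤ R := h
  have h2 : T (EuclideanSpace.single i (1:ℂ)) = (WithLp.equiv 2 _).symm (fun j => M j i) := by
    rw [show EuclideanSpace.single i (1:ℂ) = (WithLp.equiv 2 _).symm (Pi.single i 1) from rfl,
      hT, WithLp.equiv_symm_apply, Matrix.toEuclideanCLM_toLp]
    congr 1
    rw [Matrix.mulVec_single]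
    simp
    rfl
  have h3 : ‖T (EuclideanSpace.single i (1:ℂ))‖ ^ 2 = ∑ j, Complex.normSq (M j i) := by
    rw [h2, EuclideanSpace.norm_eq, Real.sq_sqrt (by positivity)]
    congr 1
    funext j
    rw [PiLp.toLp_apply]
    rw [Complex.sq_norm]
    rfl
  calc ∑ j, Complex.normSq (M j i) = ‖T (EuclideanSpace.single i (1:ℂ))‖ ^ 2 := h3.symm
    _ ≤ R ^ 2 := pow_le_pow_left₀ (norm_nonneg _) h1 2

lemma SA.norm_le_of_opNorm_le {k : ℕ} {X : SA k} {R : ℝ} (h : opNorm X.val ≤ R) :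
    ‖X‖ ≤ R * Real.sqrt k := by
  have hR0 : 0 ≤ R := le_trans (norm_nonneg _) h
  have hnorm : ‖X‖ = Real.sqrt ((Matrix.trace (X.val * X.val)).re) := rfl
  have hsum : ‖X‖ ^ 2 = ∑ i, ∑ j, Complex.normSq (X.val j i) := by
    rw [hnorm, Real.sq_sqrt]
    · rw [SA.trace_sq]; exact Complex.ofReal_re _
    · rw [SA.trace_sq, Complex.ofReal_re]
      exact Finset.sum_nonneg fun i _ => Finset.sum_nonneg fun j _ => Complex.normSq_nonneg _
  have hb : ‖X‖ ^ 2 ≤ (k : ℝ) * R ^ 2 := by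
    rw [hsum]
    calc ∑ i, ∑ j, Complex.normSq (X.val j i) ≤ ∑ _i : Fin k, R ^ 2 :=
          Finset.sum_le_sum fun i _ => sum_col_sq_le X.val h i
      _ = (k : ℝ) * R ^ 2 := by
          rw [Finset.sum_const, Finset.card_univ, Fintype.card_fin, nsmul_eq_mul]
  calc ‖X‖ = Real.sqrt (‖X‖ ^ 2) := (Real.sqrt_sq (norm_nonneg X)).symm
    _ ≤ Real.sqrt ((k : ℝ) * R ^ 2) := Real.sqrt_le_sqrt hb
    _ = R * Real.sqrt k := by
        rw [Real.sqrt_mul (Nat.cast_nonneg k), Real.sqrt_sq hR0]; ring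

end KappaGeom
section KappaEst

open Filter MeasureTheory

lemma factorial_lower_bound : ∀ q : ℕ, ((q : ℝ) / 3) ^ q ≤ (q.factorial : ℝ)
  | 0 => by norm_num
  | (p + 1) => by
    have ih := factorial_lower_bound p
    rcases Nat.eq_zero_or_pos p with rfl | hp
    · norm_num
    · have hp0 : (0:ℝ) < p := by exact_mod_cast hp
      have h1 : ((p:ℝ) + 1) / p ≤ Real.exp (1 / (p:ℝ)) := by
        have h := Real.add_one_le_exp (1 / (p:ℝ))
        have e : ((p:ℝ) + 1) / p = 1 / (p:ℝ) + 1 := by field_simp; ring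
        rw [e]; exact h
      have h2 : (((p:ℝ) + 1) / p) ^ p ≤ Real.exp 1 := by
        calc (((p:ℝ) + 1) / p) ^ p ≤ (Real.exp (1 / (p:ℝ))) ^ p :=
              pow_le_pow_left₀ (by positivity) h1 p
          _ = Real.exp 1 := by
              rw [← Real.exp_nat_mul]
              congr 1
              field_simp
      have h3 : (((p:ℝ) + 1) / 3) ^ (p + 1) ≤ ((p:ℝ) + 1) * ((p:ℝ) / 3) ^ p := by
        have e : (((p:ℝ) + 1) / 3) ^ (p + 1)
            = (((p:ℝ) + 1) / 3) * ((((p:ℝ) + 1) / p) ^ p * ((p:ℝ) / 3) ^ p) := by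
          rw [pow_succ', ← mul_pow]
          congr 2
          field_simp
        rw [e]
        have h4 : (((p:ℝ) + 1) / p) ^ p * ((p:ℝ) / 3) ^ p ≤ 3 * ((p:ℝ) / 3) ^ p :=
          mul_le_mul_of_nonneg_right
            (h2.trans (le_of_lt (lt_trans Real.exp_one_lt_d9 (by norm_num)))) (by positivity)
        calc (((p:ℝ) + 1) / 3) * ((((p:ℝ) + 1) / p) ^ p * ((p:ℝ) / 3) ^ p)
            ≤ (((p:ℝ) + 1) / 3) * (3 * ((p:ℝ) / 3) ^ p) :=
              mul_le_mul_of_nonneg_left h4 (by positivity)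
          _ = ((p:ℝ) + 1) * ((p:ℝ) / 3) ^ p := by ring
      calc (((p + 1 : ℕ) : ℝ) / 3) ^ (p + 1) = (((p:ℝ) + 1) / 3) ^ (p + 1) := by push_cast; ring_nf
        _ ≤ ((p:ℝ) + 1) * ((p:ℝ) / 3) ^ p := h3
        _ ≤ ((p:ℝ) + 1) * (p.factorial : ℝ) := mul_le_mul_of_nonneg_left ih (by positivity)
        _ = ((p + 1).factorial : ℝ) := by rw [Nat.factorial_succ]; push_cast; ring

/-- An explicit upper bound for the per-matrix-size contribution to the entropy terms. -/
def entBound (R : ℝ) : ℝ :=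
  Real.log R + Real.log Real.pi / 2 + Real.log 3 / 2 + Real.log 2 + 1

lemma real_est {R : ℝ} (hR : 0 < R) {k : ℕ} (hk : 2 ≤ k) :
    ((k:ℝ) ^ 2)⁻¹ * Real.log ((R * Real.sqrt k) ^ (k ^ 2) *
        (Real.sqrt Real.pi ^ (k ^ 2) / Real.Gamma ((k:ℝ) ^ 2 / 2 + 1))) + Real.log k / 2
      ≤ entBound R := by
  have hk1 : (1:ℝ) ≤ (k:ℝ) := by exact_mod_cast le_trans one_le_two hk
  have hk0 : (0:ℝ) < k := by linarith
  have hk2 : (2:ℝ) ≤ (k:ℝ) := by exact_mod_cast hk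
  have hL0 : 0 ≤ Real.log k := Real.log_nonneg hk1
  have hL2 : Real.log 2 ≤ Real.log k := Real.log_le_log (by norm_num) hk2
  have hkk : 2 * 2 ≤ k * k := Nat.mul_le_mul hk hk
  have hsq : k ^ 2 = k * k := sq k
  have hd4 : 4 ≤ k ^ 2 := by omega
  set q : ℕ := k ^ 2 / 2 with hqdef
  have hdm := Nat.div_add_mod (k ^ 2) 2
  have hmod : k ^ 2 % 2 < 2 := Nat.mod_lt _ (by norm_num)
  have hq1 : 2 * q ≤ k ^ 2 := by omega
  have hq2 : k ^ 2 ≤ 2 * q + 1 := by omega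
  have hq3 : 2 ≤ q := by omega
  have hQ2 : (2:ℝ) ≤ (q:ℝ) := by exact_mod_cast hq3
  have hD4 : (4:ℝ) ≤ (k:ℝ) ^ 2 := by exact_mod_cast hd4
  have hΓ : ((q:ℝ) / 3) ^ q ≤ Real.Gamma ((k:ℝ) ^ 2 / 2 + 1) := by
    calc ((q:ℝ) / 3) ^ q ≤ (q.factorial : ℝ) := factorial_lower_bound q
      _ = Real.Gamma ((q:ℝ) + 1) := (Real.Gamma_nat_eq_factorial q).symm
      _ ≤ Real.Gamma ((k:ℝ) ^ 2 / 2 + 1) := by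
          apply Real.Gamma_strictMonoOn_Ici.monotoneOn
          · exact Set.mem_Ici.2 (by linarith)
          · exact Set.mem_Ici.2 (by linarith)
          · have : 2 * (q:ℝ) ≤ (k:ℝ) ^ 2 := by exact_mod_cast hq1
            linarith
  have hΓpos : 0 < Real.Gamma ((k:ℝ) ^ 2 / 2 + 1) := Real.Gamma_pos_of_pos (by positivity)
  have hq30 : (0:ℝ) < ((q:ℝ) / 3) ^ q := by positivity
  have hρpos : (0:ℝ) < R * Real.sqrt k := by positivity
  have hsπ : (0:ℝ) < Real.sqrt Real.pi := Real.sqrt_pos.2 Real.pi_pos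
  have hmono : Real.log ((R * Real.sqrt k) ^ (k ^ 2) *
        (Real.sqrt Real.pi ^ (k ^ 2) / Real.Gamma ((k:ℝ) ^ 2 / 2 + 1)))
      ≤ Real.log ((R * Real.sqrt k) ^ (k ^ 2) *
        (Real.sqrt Real.pi ^ (k ^ 2) / ((q:ℝ) / 3) ^ q)) := by
    apply Real.log_le_log (by positivity)
    exact mul_le_mul_of_nonneg_left
      (div_le_div_of_nonneg_left (by positivity) hq30 hΓ) (by positivity)
  have hexp : Real.log ((R * Real.sqrt k) ^ (k ^ 2) *
        (Real.sqrt Real.pi ^ (k ^ 2) / ((q:ℝ) / 3) ^ q))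
      = (k:ℝ) ^ 2 * (Real.log R + Real.log k / 2)
        + ((k:ℝ) ^ 2 * (Real.log Real.pi / 2) - (q:ℝ) * (Real.log q - Real.log 3)) := by
    rw [Real.log_mul (by positivity) (by positivity), Real.log_pow,
      Real.log_div (by positivity) (ne_of_gt hq30), Real.log_pow, Real.log_pow,
      Real.log_mul (ne_of_gt hR) (ne_of_gt (Real.sqrt_pos.2 hk0)), Real.log_sqrt hk0.le,
      Real.log_sqrt Real.pi_pos.le, Real.log_div (by positivity) (by norm_num : (3:ℝ) ≠ 0)]
    push_cast
    ring
  have hlogv : Real.log ((R * Real.sqrt k) ^ (k ^ 2) *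
        (Real.sqrt Real.pi ^ (k ^ 2) / Real.Gamma ((k:ℝ) ^ 2 / 2 + 1)))
      ≤ (k:ℝ) ^ 2 * (Real.log R + Real.log k / 2)
        + ((k:ℝ) ^ 2 * (Real.log Real.pi / 2) - (q:ℝ) * (Real.log q - Real.log 3)) :=
    hexp ▸ hmono
  set L := Real.log k with hLdef
  set c := ((k:ℝ) ^ 2)⁻¹ with hcdef
  have hc0 : 0 < c := by rw [hcdef]; positivity
  have hcD : c * (k:ℝ) ^ 2 = 1 := inv_mul_cancel₀ (by positivity)
  have hlogQ : 2 * L - 2 * Real.log 2 ≤ Real.log q := by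
    have h2q : ((k:ℝ) ^ 2) ≤ 2 * (q:ℝ) + 1 := by exact_mod_cast hq2
    have h1 : (k:ℝ) ^ 2 / 4 ≤ (q:ℝ) := by nlinarith
    calc 2 * L - 2 * Real.log 2 = Real.log ((k:ℝ) ^ 2 / 4) := by
          rw [Real.log_div (by positivity) (by norm_num),
            show (4:ℝ) = 2 ^ 2 by norm_num, Real.log_pow, Real.log_pow]
          push_cast
          ring
      _ ≤ Real.log q := Real.log_le_log (by positivity) h1
  have hlogQ0 : 0 ≤ 2 * L - 2 * Real.log 2 := by linarith
  have hq2' : ((k:ℝ) ^ 2 - 1) / 2 ≤ (q:ℝ) := by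
    have h2q : ((k:ℝ) ^ 2) ≤ 2 * (q:ℝ) + 1 := by exact_mod_cast hq2
    linarith
  have hcq : c * (q:ℝ) ≤ 1 / 2 := by
    have h2q : 2 * (q:ℝ) ≤ (k:ℝ) ^ 2 := by exact_mod_cast hq1
    have := mul_le_mul_of_nonneg_left h2q hc0.le
    rw [hcD] at this
    linarith
  have hcL : c * L ≤ 1 := by
    have h1 : L ≤ (k:ℝ) - 1 := Real.log_le_sub_one_of_pos hk0
    have h2 : (k:ℝ) - 1 ≤ (k:ℝ) ^ 2 := by nlinarith
    calc c * L ≤ c * ((k:ℝ) ^ 2) := mul_le_mul_of_nonneg_left (by linarith) hc0.le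
      _ = 1 := hcD
  have hkey : c * (((k:ℝ) ^ 2 - 1) / 2 * (2 * L - 2 * Real.log 2)) ≤ c * ((q:ℝ) * Real.log q) := by
    apply mul_le_mul_of_nonneg_left _ hc0.le
    calc ((k:ℝ) ^ 2 - 1) / 2 * (2 * L - 2 * Real.log 2) ≤ (q:ℝ) * (2 * L - 2 * Real.log 2) :=
        mul_le_mul_of_nonneg_right hq2' hlogQ0
      _ ≤ (q:ℝ) * Real.log q := mul_le_mul_of_nonneg_left hlogQ (by positivity)
  have hkey2 : L - Real.log 2 - c * L + c * Real.log 2 ≤ c * ((q:ℝ) * Real.log q) := by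
    refine le_trans (le_of_eq ?_) hkey
    have e : c * (((k:ℝ) ^ 2 - 1) / 2 * (2 * L - 2 * Real.log 2))
        = (c * (k:ℝ) ^ 2) * (L - Real.log 2) - c * (L - Real.log 2) := by ring
    rw [e, hcD]
    ring
  have hcq3 : c * ((q:ℝ) * Real.log 3) ≤ Real.log 3 / 2 := by
    have h3 : (0:ℝ) ≤ Real.log 3 := Real.log_nonneg (by norm_num)
    calc c * ((q:ℝ) * Real.log 3) = (c * (q:ℝ)) * Real.log 3 := by ring
      _ ≤ (1 / 2) * Real.log 3 := mul_le_mul_of_nonneg_right hcq h3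
      _ = Real.log 3 / 2 := by ring
  have hc2 : 0 ≤ c * Real.log 2 := mul_nonneg hc0.le (Real.log_nonneg one_le_two)
  have t1 : c * Real.log ((R * Real.sqrt k) ^ (k ^ 2) *
        (Real.sqrt Real.pi ^ (k ^ 2) / Real.Gamma ((k:ℝ) ^ 2 / 2 + 1)))
      ≤ c * ((k:ℝ) ^ 2 * (Real.log R + L / 2)
        + ((k:ℝ) ^ 2 * (Real.log Real.pi / 2) - (q:ℝ) * (Real.log q - Real.log 3))) :=
    mul_le_mul_of_nonneg_left hlogv hc0.le
  have t2 : c * ((k:ℝ) ^ 2 * (Real.log R + L / 2)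
        + ((k:ℝ) ^ 2 * (Real.log Real.pi / 2) - (q:ℝ) * (Real.log q - Real.log 3)))
      = Real.log R + L / 2 + Real.log Real.pi / 2
        + c * ((q:ℝ) * Real.log 3) - c * ((q:ℝ) * Real.log q) := by
    have e : c * ((k:ℝ) ^ 2 * (Real.log R + L / 2)
          + ((k:ℝ) ^ 2 * (Real.log Real.pi / 2) - (q:ℝ) * (Real.log q - Real.log 3)))
        = (c * (k:ℝ) ^ 2) * (Real.log R + L / 2) + (c * (k:ℝ) ^ 2) * (Real.log Real.pi / 2)
          + c * ((q:ℝ) * Real.log 3) - c * ((q:ℝ) * Real.log q) := by ring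
    rw [e, hcD]
    ring
  rw [t2] at t1
  show c * _ + L / 2 ≤ _
  rw [entBound]
  linarith

end KappaEst
section KappaMeasure

open Filter MeasureTheory

/-- Master volume bound: any sequence of sets of tuples of self-adjoint matrices of operator
norm at most `R` has entropy terms bounded by `N * entBound R`. -/
lemma limsup_term_le_entBound {N : ℕ} {R : ℝ} (hR : 0 < R) (T : ∀ k : ℕ, Set (Fin N → SA k))
    (hT : ∀ k, ∀ C ∈ T k, ∀ i, opNorm ((C i).val) ≤ R) :
    Filter.atTop.limsup (fun k : ℕ =>
        (↑(((k : ℝ) ^ 2)⁻¹) : EReal) * ENNReal.log (volume (T k))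
          + (↑((N : ℝ) / 2 * Real.log k) : EReal))
      ≤ (((N : ℝ) * entBound R : ℝ) : EReal) := by
  refine Filter.limsup_le_of_le (by isBoundedDefault) ?_
  filter_upwards [Filter.eventually_ge_atTop 2] with k hk
  haveI : Nontrivial (SA k) := SA.nontrivial_of_pos (by omega)
  have hk0 : (0:ℝ) < (k:ℝ) := by exact_mod_cast (by omega : 0 < k)
  have hρ : 0 < R * Real.sqrt k := by positivity
  have hsub : T k ⊆ Set.univ.pi (fun _ : Fin N => Metric.closedBall (0 : SA k) (R * Real.sqrt k)) := by
    intro C hC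
    rw [Set.mem_univ_pi]
    intro i
    rw [Metric.mem_closedBall, dist_zero_right]
    exact SA.norm_le_of_opNorm_le (hT k C hC i)
  have hvol : volume (T k) ≤ volume (Metric.closedBall (0 : SA k) (R * Real.sqrt k)) ^ N := by
    refine (measure_mono hsub).trans ?_
    rw [volume_pi_pi]
    rw [Finset.prod_const, Finset.card_univ, Fintype.card_fin]
  have hΓpos : 0 < Real.Gamma ((k:ℝ) ^ 2 / 2 + 1) := Real.Gamma_pos_of_pos (by positivity)
  have hvpos : 0 < (R * Real.sqrt k) ^ (k ^ 2) *
      (Real.sqrt Real.pi ^ (k ^ 2) / Real.Gamma ((k:ℝ) ^ 2 / 2 + 1)) := by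
    have hsπ : (0:ℝ) < Real.sqrt Real.pi := Real.sqrt_pos.2 Real.pi_pos
    positivity
  have hball : volume (Metric.closedBall (0 : SA k) (R * Real.sqrt k))
      = ENNReal.ofReal ((R * Real.sqrt k) ^ (k ^ 2) *
          (Real.sqrt Real.pi ^ (k ^ 2) / Real.Gamma ((k:ℝ) ^ 2 / 2 + 1))) := by
    rw [InnerProductSpace.volume_closedBall, finrank_SA, Nat.cast_pow,
      ← ENNReal.ofReal_pow hρ.le, ← ENNReal.ofReal_mul (by positivity)]
  calc (↑(((k : ℝ) ^ 2)⁻¹) : EReal) * ENNReal.log (volume (T k))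
        + (↑((N : ℝ) / 2 * Real.log k) : EReal)
      ≤ (↑(((k : ℝ) ^ 2)⁻¹) : EReal) * ENNReal.log ((ENNReal.ofReal ((R * Real.sqrt k) ^ (k ^ 2) *
            (Real.sqrt Real.pi ^ (k ^ 2) / Real.Gamma ((k:ℝ) ^ 2 / 2 + 1)))) ^ N)
          + (↑((N : ℝ) / 2 * Real.log k) : EReal) := by
        refine add_le_add_left (mul_le_mul_of_nonneg_left
          (ENNReal.log_monotone ?_) (EReal.coe_nonneg.2 (by positivity))) _
        rw [← hball]
        exact hvol
    _ = ((((k : ℝ) ^ 2)⁻¹ * ((N : ℝ) * Real.log ((R * Real.sqrt k) ^ (k ^ 2) *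
            (Real.sqrt Real.pi ^ (k ^ 2) / Real.Gamma ((k:ℝ) ^ 2 / 2 + 1))))
          + (N : ℝ) / 2 * Real.log k : ℝ) : EReal) := by
        rw [ENNReal.log_pow, ENNReal.log_ofReal_of_pos hvpos, ← EReal.coe_coe_eq_natCast,
          ← EReal.coe_mul, ← EReal.coe_mul, ← EReal.coe_add]
    _ ≤ (((N : ℝ) * entBound R : ℝ) : EReal) := by
        rw [EReal.coe_le_coe_iff]
        have hest := real_est hR hk
        calc ((k : ℝ) ^ 2)⁻¹ * ((N : ℝ) * Real.log ((R * Real.sqrt k) ^ (k ^ 2) *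
                (Real.sqrt Real.pi ^ (k ^ 2) / Real.Gamma ((k:ℝ) ^ 2 / 2 + 1))))
              + (N : ℝ) / 2 * Real.log k
            = (N : ℝ) * (((k : ℝ) ^ 2)⁻¹ * Real.log ((R * Real.sqrt k) ^ (k ^ 2) *
                (Real.sqrt Real.pi ^ (k ^ 2) / Real.Gamma ((k:ℝ) ^ 2 / 2 + 1)))
              + Real.log k / 2) := by ring
          _ ≤ (N : ℝ) * entBound R := mul_le_mul_of_nonneg_left hest (Nat.cast_nonneg N)

set_option linter.unusedSectionVars false

variable {A : Type*} [Ring A] [Module ℂ A] [StarRing A]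

lemma GammaR_antitone {n m : ℕ} (a : Fin n → A) (b : Fin m → A) (R : ℝ) (τ : A →ₗ[ℂ] ℂ)
    (k : ℕ) {l₁ l₂ : ℕ} {ε₁ ε₂ : ℝ} (hl : l₁ ≤ l₂) (hε : ε₂ ≤ ε₁) :
    GammaR R a b τ k l₂ ε₂ ⊆ GammaR R a b τ k l₁ ε₁ := by
  rintro ⟨C, D⟩ ⟨h1, h2, h3⟩
  exact ⟨h1, h2, fun p hp1 hp2 w => (h3 p hp1 (hp2.trans hl) w).trans hε⟩

lemma GammaRPres_antitone {n m : ℕ} (a : Fin n → A) (b : Fin m → A) (R : ℝ) (τ : A →ₗ[ℂ] ℂ)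
    (k : ℕ) {l₁ l₂ : ℕ} {ε₁ ε₂ : ℝ} (hl : l₁ ≤ l₂) (hε : ε₂ ≤ ε₁) :
    GammaRPres R a b τ k l₂ ε₂ ⊆ GammaRPres R a b τ k l₁ ε₁ :=
  Set.image_mono (GammaR_antitone a b R τ k hl hε)

lemma GammaRPres_norm {n m : ℕ} {a : Fin n → A} {b : Fin m → A} {R : ℝ} {τ : A →ₗ[ℂ] ℂ}
    {k l : ℕ} {ε : ℝ} {C : Fin n → SA k} (hC : C ∈ GammaRPres R a b τ k l ε) :
    ∀ i, opNorm ((C i).val) ≤ R := by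
  obtain ⟨⟨C', D⟩, ⟨h1, -, -⟩, rfl⟩ := hC
  exact h1

lemma mem_gammaR_split {n m : ℕ} (a : Fin n → A) (b : Fin m → A) (R : ℝ) (τ : A →ₗ[ℂ] ℂ)
    {k l : ℕ} {ε : ℝ} {C : Fin (n + m) → SA k} {D₀ : Fin 0 → SA k}
    (h : (C, D₀) ∈ GammaR R (Fin.append a b) (fun i : Fin 0 => i.elim0) τ k l ε) :
    ((fun i => C (Fin.castAdd m i), fun j => C (Fin.natAdd n j)) ∈ GammaR R a b τ k l ε)
    ∧ ((fun j => C (Fin.natAdd n j), fun i => C (Fin.castAdd m i)) ∈ GammaR R b a τ k l ε) := by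
  obtain ⟨h1, -, h3⟩ := h
  have key : ∀ (p : ℕ), 1 ≤ p → p ≤ l → ∀ w : Fin p → Fin (n + m),
      ‖(k : ℂ)⁻¹ * Matrix.trace (wordProd (fun i => (C i).val) w)
        - τ (wordProd (Fin.append a b) w)‖ ≤ ε := by
    intro p hp1 hp2 w
    have h4 : ‖(k : ℂ)⁻¹ * Matrix.trace
          (wordProd (Fin.append (fun i => (C i).val) (fun j => (D₀ j).val)) w)
        - τ (wordProd (Fin.append (Fin.append a b) (fun i : Fin 0 => i.elim0)) w)‖ ≤ ε :=
      h3 p hp1 hp2 w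
    rwa [wordProd_congr (g := fun i => (C i).val) (w' := w)
          (fun i => append_zero_apply _ _ (w i)),
        wordProd_congr (g := Fin.append a b) (w' := w)
          (fun i => append_zero_apply _ _ (w i))] at h4
  constructor
  · refine ⟨fun i => h1 _, fun j => h1 _, ?_⟩
    intro p hp1 hp2 w
    have h5 := key p hp1 hp2 w
    show ‖(k : ℂ)⁻¹ * Matrix.trace
          (wordProd (Fin.append (fun i => (C (Fin.castAdd m i)).val)
            (fun j => (C (Fin.natAdd n j)).val)) w)
        - τ (wordProd (Fin.append a b) w)‖ ≤ ε
    rwa [← wordProd_congr (g := fun i' => (C i').val) (w' := w)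
      (fun i => append_recomb (fun i' => (C i').val) (w i))] at h5
  · refine ⟨fun j => h1 _, fun i => h1 _, ?_⟩
    intro p hp1 hp2 w
    have h5 := key p hp1 hp2 (fun i => finSwap m n (w i))
    show ‖(k : ℂ)⁻¹ * Matrix.trace
          (wordProd (Fin.append (fun j => (C (Fin.natAdd n j)).val)
            (fun i => (C (Fin.castAdd m i)).val)) w)
        - τ (wordProd (Fin.append b a) w)‖ ≤ ε
    have e1 : wordProd (Fin.append (fun j => (C (Fin.natAdd n j)).val)
          (fun i => (C (Fin.castAdd m i)).val)) w
        = wordProd (fun i => (C i).val) (fun i => finSwap m n (w i)) := by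
      rw [wordProd_swap (fun i => (C (Fin.castAdd m i)).val)
        (fun j => (C (Fin.natAdd n j)).val) w]
      exact wordProd_congr (g := fun i' => (C i').val) (w' := fun i => finSwap m n (w i))
        (fun i => append_recomb (fun i' => (C i').val) (finSwap m n (w i)))
    have e2 : wordProd (Fin.append b a) w
        = wordProd (Fin.append a b) (fun i => finSwap m n (w i)) := wordProd_swap a b w
    rw [e1, e2]
    exact h5

lemma gammaRPres_append_subset {n m : ℕ} (a : Fin n → A) (b : Fin m → A) (R : ℝ)
    (τ : A →ₗ[ℂ] ℂ) (k l : ℕ) (ε : ℝ) :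
    GammaRPres R (Fin.append a b) (fun i : Fin 0 => i.elim0) τ k l ε ⊆
      (fun C : Fin (n + m) → SA k =>
          ((fun i => C (Fin.castAdd m i)), (fun j => C (Fin.natAdd n j)))) ⁻¹'
        ((GammaRPres R a b τ k l ε) ×ˢ (GammaRPres R b a τ k l ε)) := by
  rintro C ⟨⟨C', D₀⟩, hmem, rfl⟩
  obtain ⟨hA, hB⟩ := mem_gammaR_split a b R τ hmem
  exact ⟨⟨_, hA, rfl⟩, ⟨_, hB, rfl⟩⟩

lemma volume_gammaRPres_append_le {n m : ℕ} (a : Fin n → A) (b : Fin m → A) (R : ℝ)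
    (τ : A →ₗ[ℂ] ℂ) (k l : ℕ) (ε : ℝ) :
    volume (GammaRPres R (Fin.append a b) (fun i : Fin 0 => i.elim0) τ k l ε) ≤
      volume (GammaRPres R a b τ k l ε) * volume (GammaRPres R b a τ k l ε) := by
  set e : (Fin (n + m) → SA k) ≃ᵐ (Fin n → SA k) × (Fin m → SA k) :=
    ((MeasurableEquiv.piCongrLeft (fun _ : Fin (n + m) => SA k) finSumFinEquiv).symm.trans
      (MeasurableEquiv.sumPiEquivProdPi fun _ => SA k)) with he_def
  have hmp : MeasurePreserving e volume volume :=
    (volume_measurePreserving_sumPiEquivProdPi _).comp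
      (MeasurePreserving.symm _ (volume_measurePreserving_piCongrLeft _ finSumFinEquiv))
  have happ : ∀ C : Fin (n + m) → SA k,
      e C = ((fun i => C (Fin.castAdd m i)), (fun j => C (Fin.natAdd n j))) := by
    intro C
    rfl
  calc volume (GammaRPres R (Fin.append a b) (fun i : Fin 0 => i.elim0) τ k l ε)
      ≤ volume (e ⁻¹' ((GammaRPres R a b τ k l ε) ×ˢ (GammaRPres R b a τ k l ε))) := by
        refine measure_mono fun C hC => ?_
        rw [Set.mem_preimage, happ C]
        exact gammaRPres_append_subset a b R τ k l ε hC
    _ = volume ((GammaRPres R a b τ k l ε) ×ˢ (GammaRPres R b a τ k l ε)) := by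
        rw [← MeasurableEquiv.map_apply e, hmp.map_eq]
    _ = volume (GammaRPres R a b τ k l ε) * volume (GammaRPres R b a τ k l ε) := by
        rw [MeasureTheory.Measure.volume_eq_prod, MeasureTheory.Measure.prod_prod]

end KappaMeasure
section KappaFinal

open Filter MeasureTheory

set_option linter.unusedSectionVars false

variable {A : Type*} [Ring A] [Module ℂ A] [StarRing A]

/-- The entropy term appearing in the definition of `chiPres`. -/
def termOf {n m : ℕ} (a : Fin n → A) (b : Fin m → A) (τ : A →ₗ[ℂ] ℂ) (R : ℝ) (l : ℕ) (ε : ℝ)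
    (k : ℕ) : EReal :=
  (↑(((k : ℝ) ^ 2)⁻¹) : EReal) * ENNReal.log (volume (GammaRPres R a b τ k l ε))
    + (↑((n : ℝ) / 2 * Real.log k) : EReal)

/-- The inner infimum appearing in the definition of `chiPres`. -/
def innerInf {n m : ℕ} (a : Fin n → A) (b : Fin m → A) (τ : A →ₗ[ℂ] ℂ) (R : ℝ) : EReal :=
  ⨅ (l : ℕ), ⨅ (ε : ℝ), ⨅ (_ : 0 < ε), Filter.atTop.limsup fun k : ℕ => termOf a b τ R l ε k

lemma chiPres_eq {n m : ℕ} (a : Fin n → A) (b : Fin m → A) (τ : A →ₗ[ℂ] ℂ) :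
    chiPres a b τ = ⨆ (R : ℝ), ⨆ (_ : 0 < R), innerInf a b τ R := rfl

lemma limsup_termOf_le {n m : ℕ} (a : Fin n → A) (b : Fin m → A) (τ : A →ₗ[ℂ] ℂ) {R : ℝ}
    (hR : 0 < R) (l : ℕ) (ε : ℝ) :
    Filter.atTop.limsup (fun k => termOf a b τ R l ε k) ≤ (((n : ℝ) * entBound R : ℝ) : EReal) :=
  limsup_term_le_entBound hR (fun k => GammaRPres R a b τ k l ε)
    (fun _ _ hC => GammaRPres_norm hC)

lemma limsup_termOf_ne_top {n m : ℕ} (a : Fin n → A) (b : Fin m → A) (τ : A →ₗ[ℂ] ℂ) {R : ℝ}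
    (hR : 0 < R) (l : ℕ) (ε : ℝ) :
    Filter.atTop.limsup (fun k => termOf a b τ R l ε k) ≠ ⊤ :=
  ne_top_of_le_ne_top (EReal.coe_ne_top _) (limsup_termOf_le a b τ hR l ε)

lemma termOf_mono {n m : ℕ} (a : Fin n → A) (b : Fin m → A) (τ : A →ₗ[ℂ] ℂ) (R : ℝ)
    {l₁ l₂ : ℕ} {ε₁ ε₂ : ℝ} (hl : l₁ ≤ l₂) (hε : ε₂ ≤ ε₁) (k : ℕ) :
    termOf a b τ R l₂ ε₂ k ≤ termOf a b τ R l₁ ε₁ k := by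
  refine add_le_add_left (mul_le_mul_of_nonneg_left
    (ENNReal.log_monotone (measure_mono (GammaRPres_antitone a b R τ k hl hε)))
    (EReal.coe_nonneg.2 (by positivity))) _

lemma termOf_append_le {n m : ℕ} (a : Fin n → A) (b : Fin m → A) (τ : A →ₗ[ℂ] ℂ) (R : ℝ)
    (l : ℕ) (ε : ℝ) (k : ℕ) :
    termOf (Fin.append a b) (fun i : Fin 0 => i.elim0) τ R l ε k
      ≤ termOf a b τ R l ε k + termOf b a τ R l ε k := by
  unfold termOf
  have hc : (0:ℝ) ≤ ((k : ℝ) ^ 2)⁻¹ := by positivity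
  have hsplit : (((n + m : ℕ) : ℝ) / 2 * Real.log k : ℝ)
      = ((n : ℝ) / 2 * Real.log k) + ((m : ℝ) / 2 * Real.log k) := by push_cast; ring
  calc (↑(((k : ℝ) ^ 2)⁻¹) : EReal)
        * ENNReal.log (volume (GammaRPres R (Fin.append a b) (fun i : Fin 0 => i.elim0) τ k l ε))
        + (↑(((n + m : ℕ) : ℝ) / 2 * Real.log k) : EReal)
      ≤ (↑(((k : ℝ) ^ 2)⁻¹) : EReal)
          * (ENNReal.log (volume (GammaRPres R a b τ k l ε))
            + ENNReal.log (volume (GammaRPres R b a τ k l ε)))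
          + (↑(((n + m : ℕ) : ℝ) / 2 * Real.log k) : EReal) := by
        refine add_le_add_left (mul_le_mul_of_nonneg_left ?_ (EReal.coe_nonneg.2 hc)) _
        rw [← ENNReal.log_mul_add]
        exact ENNReal.log_monotone (volume_gammaRPres_append_le a b R τ k l ε)
    _ ≤ ((↑(((k : ℝ) ^ 2)⁻¹) : EReal) * ENNReal.log (volume (GammaRPres R a b τ k l ε))
          + (↑(((k : ℝ) ^ 2)⁻¹) : EReal) * ENNReal.log (volume (GammaRPres R b a τ k l ε)))
          + (↑(((n + m : ℕ) : ℝ) / 2 * Real.log k) : EReal) :=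
        add_le_add_left (EReal.coe_mul_add_le _ hc _ _) _
    _ = ((↑(((k : ℝ) ^ 2)⁻¹) : EReal) * ENNReal.log (volume (GammaRPres R a b τ k l ε))
          + (↑((n : ℝ) / 2 * Real.log k) : EReal))
        + ((↑(((k : ℝ) ^ 2)⁻¹) : EReal) * ENNReal.log (volume (GammaRPres R b a τ k l ε))
          + (↑((m : ℝ) / 2 * Real.log k) : EReal)) := by
        rw [hsplit, EReal.coe_add]
        exact add_add_add_comm _ _ _ _

lemma innerInf_append_le {n m : ℕ} (a : Fin n → A) (b : Fin m → A) (τ : A →ₗ[ℂ] ℂ) (R : ℝ)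
    (hR : 0 < R) :
    innerInf (Fin.append a b) (fun i : Fin 0 => i.elim0) τ R
      ≤ innerInf a b τ R + innerInf b a τ R := by
  have hFtop : innerInf a b τ R ≠ ⊤ :=
    ne_top_of_le_ne_top (limsup_termOf_ne_top a b τ hR 0 1)
      (iInf_le_of_le 0 (iInf_le_of_le 1 (iInf_le _ one_pos)))
  have hGtop : innerInf b a τ R ≠ ⊤ :=
    ne_top_of_le_ne_top (limsup_termOf_ne_top b a τ hR 0 1)
      (iInf_le_of_le 0 (iInf_le_of_le 1 (iInf_le _ one_pos)))
  refine EReal.le_add_of_forall_gt (Or.inr hGtop) (Or.inl hFtop) fun u hu v hv => ?_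
  obtain ⟨l₁, hl₁⟩ := iInf_lt_iff.1 hu
  obtain ⟨ε₁, hε₁'⟩ := iInf_lt_iff.1 hl₁
  obtain ⟨hε₁, hF⟩ := iInf_lt_iff.1 hε₁'
  obtain ⟨l₂, hl₂⟩ := iInf_lt_iff.1 hv
  obtain ⟨ε₂, hε₂'⟩ := iInf_lt_iff.1 hl₂
  obtain ⟨hε₂, hG⟩ := iInf_lt_iff.1 hε₂'
  have hεm : 0 < min ε₁ ε₂ := lt_min hε₁ hε₂
  calc innerInf (Fin.append a b) (fun i : Fin 0 => i.elim0) τ R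
      ≤ Filter.atTop.limsup (fun k => termOf (Fin.append a b) (fun i : Fin 0 => i.elim0) τ R
          (max l₁ l₂) (min ε₁ ε₂) k) :=
        iInf_le_of_le (max l₁ l₂) (iInf_le_of_le (min ε₁ ε₂) (iInf_le _ hεm))
    _ ≤ Filter.atTop.limsup ((fun k => termOf a b τ R (max l₁ l₂) (min ε₁ ε₂) k)
          + (fun k => termOf b a τ R (max l₁ l₂) (min ε₁ ε₂) k)) :=
        Filter.limsup_le_limsup (Filter.Eventually.of_forall fun k =>
          termOf_append_le a b τ R (max l₁ l₂) (min ε₁ ε₂) k)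
    _ ≤ Filter.atTop.limsup (fun k => termOf a b τ R (max l₁ l₂) (min ε₁ ε₂) k)
          + Filter.atTop.limsup (fun k => termOf b a τ R (max l₁ l₂) (min ε₁ ε₂) k) :=
        EReal.limsup_add_le (Or.inr (limsup_termOf_ne_top b a τ hR _ _))
          (Or.inl (limsup_termOf_ne_top a b τ hR _ _))
    _ ≤ Filter.atTop.limsup (fun k => termOf a b τ R l₁ ε₁ k)
          + Filter.atTop.limsup (fun k => termOf b a τ R l₂ ε₂ k) :=
        add_le_add
          (Filter.limsup_le_limsup (Filter.Eventually.of_forall fun k =>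
            termOf_mono a b τ R (le_max_left _ _) (min_le_left _ _) k))
          (Filter.limsup_le_limsup (Filter.Eventually.of_forall fun k =>
            termOf_mono b a τ R (le_max_right _ _) (min_le_right _ _) k))
    _ ≤ u + v := add_le_add hF.le hG.le

lemma chi_append_le {n m : ℕ} (a : Fin n → A) (b : Fin m → A) (τ : A →ₗ[ℂ] ℂ) :
    chi (Fin.append a b) τ ≤ chiPres a b τ + chiPres b a τ := by
  rw [show chi (Fin.append a b) τ = ⨆ (R : ℝ), ⨆ (_ : 0 < R),
        innerInf (Fin.append a b) (fun i : Fin 0 => i.elim0) τ R from rfl,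
      chiPres_eq a b τ, chiPres_eq b a τ]
  refine iSup_le fun R => iSup_le fun hR => ?_
  exact le_trans (innerInf_append_le a b τ R hR)
    (add_le_add (le_iSup_of_le R (le_iSup_of_le hR le_rfl))
      (le_iSup_of_le R (le_iSup_of_le hR le_rfl)))

lemma kappa_append_le {n m : ℕ} (a : Fin n → A) (b : Fin m → A) :
    kappa (Fin.append a b) ≤ kappaPres a b + kappaPres b a := by
  refine iSup_le fun τ => iSup_le fun hτ => ?_
  refine le_trans (chi_append_le a b τ) ?_
  exact add_le_add (le_iSup_of_le τ (le_iSup_of_le hτ le_rfl))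
    (le_iSup_of_le τ (le_iSup_of_le hτ le_rfl))

/-! #### Restriction to a subalgebra -/

lemma isTracialState_comp {B : Type*} [Ring B] [Module ℂ B] [StarRing B]
    {τ : A →ₗ[ℂ] ℂ} (hτ : IsTracialState τ) (φ : B →ₗ[ℂ] A) (hφ1 : φ 1 = 1)
    (hφm : ∀ x y : B, φ (x * y) = φ x * φ y) (hφs : ∀ x : B, φ (star x) = star (φ x)) :
    IsTracialState (τ.comp φ) := by
  constructor
  · rw [LinearMap.comp_apply, hφ1]; exact hτ.map_one
  · intro x
    rw [LinearMap.comp_apply, hφm, hφs]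
    exact hτ.nonneg (φ x)
  · intro x y
    rw [LinearMap.comp_apply, LinearMap.comp_apply, hφm, hφm]
    exact hτ.mul_comm _ _

lemma chiPres_le_chi_comp {B : Type*} [Ring B] [Module ℂ B] [StarRing B]
    (φ : B →ₗ[ℂ] A) (hφ1 : φ 1 = 1) (hφm : ∀ x y : B, φ (x * y) = φ x * φ y)
    {n m : ℕ} (x' : Fin n → B) (y : Fin m → A) (τ : A →ₗ[ℂ] ℂ) :
    chiPres (fun i => φ (x' i)) y τ ≤ chi x' (τ.comp φ) := by
  rw [show chi x' (τ.comp φ) = ⨆ (R : ℝ), ⨆ (_ : 0 < R),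
        innerInf x' (fun i : Fin 0 => i.elim0) (τ.comp φ) R from rfl,
      chiPres_eq (fun i => φ (x' i)) y τ]
  refine iSup_le fun R => iSup_le fun hR => le_iSup_of_le R (le_iSup_of_le hR ?_)
  refine le_iInf fun l => le_iInf fun ε => le_iInf fun hε => ?_
  refine le_trans (iInf_le_of_le l (iInf_le_of_le ε (iInf_le _ hε))) ?_
  refine Filter.limsup_le_limsup (Filter.Eventually.of_forall fun k => ?_)
  refine add_le_add_left (mul_le_mul_of_nonneg_left
    (ENNReal.log_monotone (measure_mono ?_)) (EReal.coe_nonneg.2 (by positivity))) _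
  rintro C ⟨⟨C', D⟩, ⟨h1, h2, h3⟩, rfl⟩
  refine ⟨(C', fun j : Fin 0 => j.elim0), ⟨h1, fun j => j.elim0, ?_⟩, rfl⟩
  intro p hp1 hp2 w
  let ψ : B →* A := { toFun := φ, map_one' := hφ1, map_mul' := hφm }
  have h4 : ‖(k : ℂ)⁻¹ * Matrix.trace
        (wordProd (Fin.append (fun i => (C' i).val) (fun j => (D j).val))
          (fun i => Fin.castAdd m (w i)))
      - τ (wordProd (Fin.append (fun i => φ (x' i)) y) (fun i => Fin.castAdd m (w i)))‖ ≤ ε :=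
    h3 p hp1 hp2 (fun i => Fin.castAdd m (w i))
  have e1 : wordProd (Fin.append (fun i => (C' i).val)
        (fun j : Fin 0 => ((fun j' : Fin 0 => j'.elim0 : Fin 0 → SA k) j).val)) w
      = wordProd (Fin.append (fun i => (C' i).val) (fun j => (D j).val))
        (fun i => Fin.castAdd m (w i)) := by
    refine wordProd_congr fun i => ?_
    rw [append_zero_apply, Fin.append_left]
  have e2 : (τ.comp φ) (wordProd (Fin.append x' fun i : Fin 0 => i.elim0) w)
      = τ (wordProd (Fin.append (fun i => φ (x' i)) y) (fun i => Fin.castAdd m (w i))) := by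
    rw [LinearMap.comp_apply]
    congr 1
    calc φ (wordProd (Fin.append x' fun i : Fin 0 => i.elim0) w)
        = wordProd (fun i => φ (Fin.append x' (fun i' : Fin 0 => i'.elim0) i)) w :=
          map_wordProd ψ _ w
      _ = wordProd (Fin.append (fun i => φ (x' i)) y) (fun i => Fin.castAdd m (w i)) := by
          refine wordProd_congr fun i => ?_
          rw [append_zero_apply, Fin.append_left]
  show ‖(k : ℂ)⁻¹ * Matrix.trace
        (wordProd (Fin.append (fun i => (C' i).val)
          (fun j : Fin 0 => ((fun j' : Fin 0 => j'.elim0 : Fin 0 → SA k) j).val)) w)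
      - (τ.comp φ) (wordProd (Fin.append x' fun i : Fin 0 => i.elim0) w)‖ ≤ ε
  rw [e1, e2]
  exact h4

lemma kappaPres_le_kappa {B : Type*} [Ring B] [Module ℂ B] [StarRing B]
    (φ : B →ₗ[ℂ] A) (hφ1 : φ 1 = 1) (hφm : ∀ x y : B, φ (x * y) = φ x * φ y)
    (hφs : ∀ x : B, φ (star x) = star (φ x))
    {n m : ℕ} (x' : Fin n → B) (y : Fin m → A) :
    kappaPres (fun i => φ (x' i)) y ≤ kappa x' := by
  refine iSup_le fun τ => iSup_le fun hτ => ?_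
  exact le_trans (chiPres_le_chi_comp φ hφ1 hφm x' y τ)
    (le_iSup_of_le (τ.comp φ) (le_iSup_of_le (isTracialState_comp hτ φ hφ1 hφm hφs) le_rfl))

end KappaFinal
/-- Subadditivity of the free capacity:
`κ(a₁,…,aₙ,b₁,…,bₘ) ≤ κ(a₁,…,aₙ : b₁,…,bₘ) + κ(b₁,…,bₘ : a₁,…,aₙ) ≤ κ(a₁,…,aₙ) + κ(b₁,…,bₘ)`,
where the last two free capacities are computed in the C*-subalgebras generated by
`a₁,…,aₙ` resp. `b₁,…,bₘ`. -/
theorem kappa_subadditive {A : Type*} [NormedRing A] [NormedAlgebra ℂ A] [StarRing A]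
    [CStarRing A] [CompleteSpace A] [StarModule ℂ A] {n m : ℕ}
    (a : Fin n → A) (b : Fin m → A)
    (ha : ∀ i, IsSelfAdjoint (a i)) (hb : ∀ j, IsSelfAdjoint (b j))
    (hgen : (StarAlgebra.adjoin ℂ (Set.range a ∪ Set.range b)).topologicalClosure = ⊤) :
    kappa (Fin.append a b) ≤ kappaPres a b + kappaPres b a ∧
    kappaPres a b + kappaPres b a ≤
      kappa (fun i => (⟨a i, StarSubalgebra.le_topologicalClosure _
          (StarAlgebra.subset_adjoin ℂ _ (Set.mem_range_self i))⟩ :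
          (StarAlgebra.adjoin ℂ (Set.range a)).topologicalClosure))
      + kappa (fun j => (⟨b j, StarSubalgebra.le_topologicalClosure _
          (StarAlgebra.subset_adjoin ℂ _ (Set.mem_range_self j))⟩ :
          (StarAlgebra.adjoin ℂ (Set.range b)).topologicalClosure)) := by
  constructor
  · exact kappa_append_le a b
  · refine add_le_add ?_ ?_
    · exact kappaPres_le_kappa
        (((StarAlgebra.adjoin ℂ (Set.range a)).topologicalClosure.subtype).toAlgHom.toLinearMap)
        rfl (fun _ _ => rfl) (fun _ => rfl)
        (fun i => (⟨a i, StarSubalgebra.le_topologicalClosure _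
          (StarAlgebra.subset_adjoin ℂ _ (Set.mem_range_self i))⟩ :
          (StarAlgebra.adjoin ℂ (Set.range a)).topologicalClosure)) b
    · exact kappaPres_le_kappa
        (((StarAlgebra.adjoin ℂ (Set.range b)).topologicalClosure.subtype).toAlgHom.toLinearMap)
        rfl (fun _ _ => rfl) (fun _ => rfl)
        (fun j => (⟨b j, StarSubalgebra.le_topologicalClosure _
          (StarAlgebra.subset_adjoin ℂ _ (Set.mem_range_self j))⟩ :
          (StarAlgebra.adjoin ℂ (Set.range b)).topologicalClosure)) a
end
end
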